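/- arXiv:2202.07491 — 3 statements merged into one kernel-verified Lean document; each statement's English description precedes it below -/
import Mathlib

section
/- Let (X, μ) be a measure space, 1 ≤ q < ∞, and let A, E ⊂ X be measurable sets with 0 < μ(A) < ∞ and 0 < μ(E) < ∞ such that μ(A ∩ E) ≥ θ μ(E) for some θ > 0. Let u be a function that is integrable on A ∪ E and suppose that for some M ≥ 0, ‖u − u_A‖_{L^q(A)} ≤ M and ‖u − u_E‖_{L^q(E)} ≤ M, where u_A = (1/μ(A)) ∫_A u dμ and u_E = (1/μ(E)) ∫_E u dμ. Then ‖u − u_{A∪E}‖_{L^q(A∪E)} ≤ 4(1 + θ^{−1/q}) M, where u_{A∪E} = (1/μ(A∪E)) ∫_{A∪E} u dμ. -/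
open MeasureTheory Metric Set Filter ENNReal NNReal

noncomputable section

/-- Pointwise Lipschitz constant (as an extended nonnegative real);
it is `0` at isolated points since the limsup is over the punctured neighbourhood filter. -/
def lipConst {X : Type*} [MetricSpace X] (u : X → ℝ) (x : X) : ℝ≥0∞ :=
  Filter.limsup (fun y => ENNReal.ofReal (|u y - u x| / dist y x)) (nhdsWithin x {x}ᶜ)

/-- A real-valued function is Lipschitz (with some constant). -/
def IsLip {X : Type*} [MetricSpace X] (u : X → ℝ) : Prop :=
  ∃ L : NNReal, LipschitzWith L u

/-- A doubling measure on a metric space: balls have positive finite measure and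
`μ(B(x,2r)) ≤ C μ(B(x,r))`. -/
def IsDoubling {X : Type*} [MetricSpace X] [MeasurableSpace X] (μ : Measure X) : Prop :=
  ∃ C : ℝ≥0∞, ∀ (x : X) (r : ℝ), 0 < r →
    0 < μ (ball x r) ∧ μ (ball x r) < ⊤ ∧ μ (ball x (2 * r)) ≤ C * μ (ball x r)

/-- The (q,p)-Poincaré inequality (Lipschitz formulation) with dilation constant `lam`. -/
def PoincareWith {X : Type*} [MetricSpace X] [MeasurableSpace X] (μ : Measure X)
    (q p lam : ℝ) : Prop :=
  ∃ C : ℝ, 0 < C ∧ ∀ (x : X) (r : ℝ), 0 < r → ∀ u : X → ℝ, IsLip u →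
    ((∫⁻ y in ball x r,
        ENNReal.ofReal |u y - ⨍ z in ball x r, u z ∂μ| ^ q ∂μ) / μ (ball x r)) ^ (1 / q)
      ≤ ENNReal.ofReal (C * r) *
        ((∫⁻ y in ball x (lam * r), lipConst u y ^ p ∂μ) / μ (ball x (lam * r))) ^ (1 / p)

/-- `μ` supports a (q,p)-Poincaré inequality (Lipschitz formulation). -/
def SupportsPoincare {X : Type*} [MetricSpace X] [MeasurableSpace X] (μ : Measure X)
    (q p : ℝ) : Prop :=
  ∃ lam : ℝ, 1 ≤ lam ∧ PoincareWith μ q p lam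

/-- The variational p-capacity (Lipschitz formulation) of `E` with respect to `Ω`. -/
def varCap {X : Type*} [MetricSpace X] [MeasurableSpace X] (μ : Measure X) (p : ℝ)
    (E Ω : Set X) : ℝ≥0∞ :=
  ⨅ (u : X → ℝ) (_ : IsLip u ∧ (∀ x ∈ E, u x = 1) ∧ (∀ x ∉ Ω, u x = 0)),
    ∫⁻ x in Ω, lipConst u x ^ p ∂μ

/-- Euclidean n-space. -/
abbrev En (n : ℕ) := EuclideanSpace ℝ (Fin n)

/-- The weighted measure `dμ = w dx`. -/
def wMeasure {n : ℕ} (w : En n → ℝ) : Measure (En n) :=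
  volume.withDensity (fun x => ENNReal.ofReal (w x))

/-- The positive hyperquadrant. -/
def Xplus (n : ℕ) : Set (En n) := {x : En n | ∀ j : Fin n, 0 ≤ x j}

/-- The negative hyperquadrant. -/
def Xminus (n : ℕ) : Set (En n) := {x : En n | ∀ j : Fin n, x j ≤ 0}

/-- The Euclidean bow-tie. -/
def XBow (n : ℕ) : Set (En n) := Xplus n ∪ Xminus n

/-- The restriction of a measure to a subset, as a measure on the subtype. -/
def subMeasure {X : Type*} [MeasurableSpace X] (μ : Measure X) (S : Set X) : Measure S :=
  μ.comap Subtype.val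

/-- The folding map `T(x₁,…,xₙ) = (|x₁|,…,|xₙ|)`. -/
def Tmap {n : ℕ} (x : En n) : En n := WithLp.toLp 2 (fun j => |x j|)

/-- Muckenhoupt A_p condition (for 1 ≤ p < ∞). -/
def IsApWeight {α : Type*} [MetricSpace α] [MeasureSpace α] (p : ℝ) (w : α → ℝ) : Prop :=
  (p = 1 ∧ ∃ C : ℝ, 0 < C ∧ ∀ (x : α) (r : ℝ), 0 < r →
      (⨍ y in ball x r, w y ∂volume) ≤ C * essInf w (volume.restrict (ball x r))) ∨
  (1 < p ∧ ∃ C : ℝ, 0 < C ∧ ∀ (x : α) (r : ℝ), 0 < r →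
      (⨍ y in ball x r, w y ∂volume) *
        (⨍ y in ball x r, w y ^ (1 / (1 - p)) ∂volume) ^ (p - 1) ≤ C)

/-- The surface area ω_{n-1} of the unit sphere in ℝⁿ (with ω₀ = 2),
computed as n times the volume of the unit ball. -/
def sphereArea (n : ℕ) : ℝ := n * (volume (ball (0 : En n) 1)).toReal

/-- The two-sided capacity estimate
`cap_{p,μ}^{X⁺}({0}, B_r ∩ X⁺) ≃ r^{-p} μ(B_r)` for all `r > 0`. -/
def capCondPlus (n : ℕ) (μ : Measure (En n)) (p : ℝ) : Prop :=
  ∃ c : ℝ, 1 ≤ c ∧ ∀ r : ℝ, 0 < r →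
    ENNReal.ofReal c⁻¹ * (μ (ball 0 r) / ENNReal.ofReal (r ^ p)) ≤
      varCap (subMeasure μ (Xplus n)) p {x : Xplus n | (x : En n) = 0}
        (Subtype.val ⁻¹' ball 0 r) ∧
    varCap (subMeasure μ (Xplus n)) p {x : Xplus n | (x : En n) = 0}
        (Subtype.val ⁻¹' ball 0 r) ≤
      ENNReal.ofReal c * (μ (ball 0 r) / ENNReal.ofReal (r ^ p))

/-- `φ(ρ) = max{1, -log ρ}`. -/
def phi (ρ : ℝ) : ℝ := max 1 (-Real.log ρ)


/-- eLpNorm over a sum of measures is at most the sum of eLpNorms, for exponent ≥ 1. -/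
private lemma my_eLpNorm_add_measure_le {X : Type*} [MeasurableSpace X] {μ ν : Measure X}
    {q : ℝ} (hq : 1 ≤ q) (f : X → ℝ) :
    eLpNorm f (ENNReal.ofReal q) (μ + ν) ≤
      eLpNorm f (ENNReal.ofReal q) μ + eLpNorm f (ENNReal.ofReal q) ν := by
  have hqpos : (0:ℝ) < q := lt_of_lt_of_le one_pos hq
  have hq0 : (ENNReal.ofReal q) ≠ 0 := by
    simp only [ne_eq, ENNReal.ofReal_eq_zero, not_le]; linarith
  have hqt : (ENNReal.ofReal q) ≠ ⊤ := ENNReal.ofReal_ne_top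
  have hqr : (ENNReal.ofReal q).toReal = q := ENNReal.toReal_ofReal hqpos.le
  rw [eLpNorm_eq_eLpNorm' hq0 hqt, eLpNorm_eq_eLpNorm' hq0 hqt, eLpNorm_eq_eLpNorm' hq0 hqt,
    hqr]
  unfold eLpNorm'
  rw [lintegral_add_measure]
  have key := ENNReal.rpow_add_rpow_le_add
    ((∫⁻ a, ‖f a‖ₑ ^ q ∂μ) ^ (1/q)) ((∫⁻ a, ‖f a‖ₑ ^ q ∂ν) ^ (1/q)) hq
  rw [← ENNReal.rpow_mul, ← ENNReal.rpow_mul, one_div,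
    inv_mul_cancel₀ (by linarith : q ≠ 0), ENNReal.rpow_one, ENNReal.rpow_one] at key
  simpa using key

/-- eLpNorm of a constant over the restriction to `S`. -/
private lemma my_eLpNorm_const {X : Type*} [MeasurableSpace X] (μ : Measure X)
    {q : ℝ} (hq : 1 ≤ q) (S : Set X) (c : ℝ) :
    eLpNorm (fun _ : X => c) (ENNReal.ofReal q) (μ.restrict S)
      = ENNReal.ofReal |c| * (μ S) ^ (1/q) := by
  have hqpos : (0:ℝ) < q := lt_of_lt_of_le one_pos hq
  have hq0 : (ENNReal.ofReal q) ≠ 0 := by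
    simp only [ne_eq, ENNReal.ofReal_eq_zero, not_le]; linarith
  have hqt : (ENNReal.ofReal q) ≠ ⊤ := ENNReal.ofReal_ne_top
  have hqr : (ENNReal.ofReal q).toReal = q := ENNReal.toReal_ofReal hqpos.le
  rw [eLpNorm_const' c hq0 hqt, Measure.restrict_apply_univ, hqr,
    ← ofReal_norm, Real.norm_eq_abs]

/-- Key average estimate: `|u_S - c| μ(S)^{1/q} ≤ ‖u - c‖_{L^q(S)}`. -/
private lemma my_avg_le {X : Type*} [MeasurableSpace X] (μ : Measure X) {q : ℝ} (hq : 1 ≤ q)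
    {S : Set X} (hS0 : μ S ≠ 0) (hSfin : μ S ≠ ⊤)
    {u : X → ℝ} (hu : IntegrableOn u S μ) (c : ℝ) :
    ENNReal.ofReal |(⨍ y in S, u y ∂μ) - c| * (μ S) ^ (1/q) ≤
      eLpNorm (fun x => u x - c) (ENNReal.ofReal q) (μ.restrict S) := by
  have hqpos : (0:ℝ) < q := lt_of_lt_of_le one_pos hq
  have hq0 : (ENNReal.ofReal q) ≠ 0 := by
    simp only [ne_eq, ENNReal.ofReal_eq_zero, not_le]; linarith
  have hqt : (ENNReal.ofReal q) ≠ ⊤ := ENNReal.ofReal_ne_top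
  have hqr : (ENNReal.ofReal q).toReal = q := ENNReal.toReal_ofReal hqpos.le
  set g : X → ℝ := fun x => u x - c with hgdef
  have hci : IntegrableOn (fun _ : X => c) S μ := integrableOn_const hSfin
  have hgi : IntegrableOn g S μ := hu.sub hci
  have hT : (0:ℝ) < (μ S).toReal := ENNReal.toReal_pos hS0 hSfin
  have havg : (⨍ y in S, u y ∂μ) - c = ⨍ y in S, g y ∂μ := by
    rw [setAverage_eq, setAverage_eq, integral_sub hu hci, setIntegral_const,
      smul_eq_mul, smul_eq_mul, smul_eq_mul, mul_sub]
    have hT' : μ.real S ≠ 0 := hT.ne'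
    field_simp
  have habs : |⨍ y in S, g y ∂μ| ≤ (μ S).toReal⁻¹ * ∫ y in S, |g y| ∂μ := by
    rw [setAverage_eq, smul_eq_mul, abs_mul, abs_of_nonneg (by positivity)]
    have := norm_integral_le_integral_norm (μ := μ.restrict S) g
    simp only [Real.norm_eq_abs] at this
    gcongr
    exact le_rfl
  have hL1 : ENNReal.ofReal (∫ y in S, |g y| ∂μ) = eLpNorm g 1 (μ.restrict S) := by
    rw [eLpNorm_one_eq_lintegral_enorm,
      ← ofReal_integral_norm_eq_lintegral_enorm hgi]
    simp only [Real.norm_eq_abs]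
  have hholder : eLpNorm g 1 (μ.restrict S) ≤
      eLpNorm g (ENNReal.ofReal q) (μ.restrict S) * (μ S) ^ (1 - 1/q) := by
    have h := eLpNorm_le_eLpNorm_mul_rpow_measure_univ (p := 1) (q := ENNReal.ofReal q)
      (ENNReal.one_le_ofReal.mpr hq) hgi.aestronglyMeasurable
    simpa [Measure.restrict_apply_univ, hqr] using h
  calc ENNReal.ofReal |(⨍ y in S, u y ∂μ) - c| * (μ S) ^ (1/q)
      = ENNReal.ofReal |⨍ y in S, g y ∂μ| * (μ S) ^ (1/q) := by rw [havg]
    _ ≤ ENNReal.ofReal ((μ S).toReal⁻¹ * ∫ y in S, |g y| ∂μ) * (μ S) ^ (1/q) := by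
        exact mul_le_mul_left (ENNReal.ofReal_le_ofReal habs) _
    _ = (μ S)⁻¹ * eLpNorm g 1 (μ.restrict S) * (μ S) ^ (1/q) := by
        rw [ENNReal.ofReal_mul (by positivity), hL1,
          ENNReal.ofReal_inv_of_pos hT, ENNReal.ofReal_toReal hSfin]
    _ ≤ (μ S)⁻¹ * (eLpNorm g (ENNReal.ofReal q) (μ.restrict S) * (μ S) ^ (1 - 1/q))
          * (μ S) ^ (1/q) := by gcongr
    _ = eLpNorm g (ENNReal.ofReal q) (μ.restrict S)
          * ((μ S)⁻¹ * ((μ S) ^ (1 - 1/q) * (μ S) ^ (1/q))) := by ring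
    _ = eLpNorm g (ENNReal.ofReal q) (μ.restrict S) := by
        rw [← ENNReal.rpow_add _ _ hS0 hSfin]
        norm_num
        rw [ENNReal.inv_mul_cancel hS0 hSfin, mul_one]

theorem statement4 {X : Type*} [MeasurableSpace X] (μ : Measure X)
    (q : ℝ) (hq : 1 ≤ q)
    (A E : Set X) (hA : MeasurableSet A) (hE : MeasurableSet E)
    (hA0 : 0 < μ A) (hAfin : μ A < ⊤) (hE0 : 0 < μ E) (hEfin : μ E < ⊤)
    (θ : ℝ) (hθ : 0 < θ) (hAE : ENNReal.ofReal θ * μ E ≤ μ (A ∩ E))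
    (u : X → ℝ) (hu : IntegrableOn u (A ∪ E) μ)
    (M : ℝ) (hM : 0 ≤ M)
    (hnA : eLpNorm (fun x => u x - ⨍ y in A, u y ∂μ) (ENNReal.ofReal q)
      (μ.restrict A) ≤ ENNReal.ofReal M)
    (hnE : eLpNorm (fun x => u x - ⨍ y in E, u y ∂μ) (ENNReal.ofReal q)
      (μ.restrict E) ≤ ENNReal.ofReal M) :
    eLpNorm (fun x => u x - ⨍ y in A ∪ E, u y ∂μ) (ENNReal.ofReal q)
      (μ.restrict (A ∪ E)) ≤ ENNReal.ofReal (4 * (1 + θ ^ (-(1 / q))) * M) := by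
  have hqpos : (0:ℝ) < q := lt_of_lt_of_le one_pos hq
  set q' := ENNReal.ofReal q with hq'def
  have hq1' : (1:ℝ≥0∞) ≤ q' := ENNReal.one_le_ofReal.mpr hq
  set uA := ⨍ y in A, u y ∂μ with huAdef
  set uE := ⨍ y in E, u y ∂μ with huEdef
  set uU := ⨍ y in A ∪ E, u y ∂μ with huUdef
  set t : ℝ := θ ^ (-(1/q)) with htdef
  have ht0 : 0 ≤ t := Real.rpow_nonneg hθ.le _
  -- measure facts
  have hU0 : μ (A ∪ E) ≠ 0 := (lt_of_lt_of_le hA0 (measure_mono subset_union_left)).ne'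
  have hUfin : μ (A ∪ E) ≠ ⊤ :=
    (lt_of_le_of_lt (measure_union_le A E) (ENNReal.add_lt_top.mpr ⟨hAfin, hEfin⟩)).ne
  have hI0 : μ (A ∩ E) ≠ 0 := by
    refine (lt_of_lt_of_le ?_ hAE).ne'
    exact ENNReal.mul_pos (by simp [ENNReal.ofReal_eq_zero]; linarith) hE0.ne'
  have hIfin : μ (A ∩ E) ≠ ⊤ := (lt_of_le_of_lt (measure_mono inter_subset_left) hAfin).ne
  -- integrability
  have huAi : IntegrableOn u A μ := hu.mono_set subset_union_left
  have huEi : IntegrableOn u E μ := hu.mono_set subset_union_right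
  have huIi : IntegrableOn u (A ∩ E) μ :=
    hu.mono_set (inter_subset_left.trans subset_union_left)
  have monoA : ∀ f : X → ℝ, eLpNorm f q' (μ.restrict (A ∩ E)) ≤ eLpNorm f q' (μ.restrict A) :=
    fun f => eLpNorm_mono_measure f (Measure.restrict_mono inter_subset_left le_rfl)
  have monoE : ∀ f : X → ℝ, eLpNorm f q' (μ.restrict (A ∩ E)) ≤ eLpNorm f q' (μ.restrict E) :=
    fun f => eLpNorm_mono_measure f (Measure.restrict_mono inter_subset_right le_rfl)
  -- Step 4: compare the averages over A and E via A ∩ E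
  have h4a : ENNReal.ofReal |(⨍ y in A ∩ E, u y ∂μ) - uA| * (μ (A ∩ E)) ^ (1/q)
      ≤ ENNReal.ofReal M := (my_avg_le μ hq hI0 hIfin huIi uA).trans ((monoA _).trans hnA)
  have h4b : ENNReal.ofReal |(⨍ y in A ∩ E, u y ∂μ) - uE| * (μ (A ∩ E)) ^ (1/q)
      ≤ ENNReal.ofReal M := (my_avg_le μ hq hI0 hIfin huIi uE).trans ((monoE _).trans hnE)
  have habssum : |uA - uE| ≤
      |(⨍ y in A ∩ E, u y ∂μ) - uA| + |(⨍ y in A ∩ E, u y ∂μ) - uE| := by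
    have := abs_sub_le uA (⨍ y in A ∩ E, u y ∂μ) uE
    rwa [abs_sub_comm uA (⨍ y in A ∩ E, u y ∂μ)] at this
  have h4 : ENNReal.ofReal |uA - uE| * (μ (A ∩ E)) ^ (1/q) ≤ ENNReal.ofReal (M + M) := by
    calc ENNReal.ofReal |uA - uE| * (μ (A ∩ E)) ^ (1/q)
        ≤ (ENNReal.ofReal |(⨍ y in A ∩ E, u y ∂μ) - uA|
            + ENNReal.ofReal |(⨍ y in A ∩ E, u y ∂μ) - uE|) * (μ (A ∩ E)) ^ (1/q) := by
          exact mul_le_mul_left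
            ((ENNReal.ofReal_le_ofReal habssum).trans ENNReal.ofReal_add_le) _
      _ = ENNReal.ofReal |(⨍ y in A ∩ E, u y ∂μ) - uA| * (μ (A ∩ E)) ^ (1/q)
            + ENNReal.ofReal |(⨍ y in A ∩ E, u y ∂μ) - uE| * (μ (A ∩ E)) ^ (1/q) := by ring
      _ ≤ ENNReal.ofReal M + ENNReal.ofReal M := add_le_add h4a h4b
      _ = ENNReal.ofReal (M + M) := (ENNReal.ofReal_add hM hM).symm
  have hmge : ENNReal.ofReal (θ ^ (1/q)) * (μ E) ^ (1/q) ≤ (μ (A ∩ E)) ^ (1/q) := by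
    rw [← ENNReal.ofReal_rpow_of_pos hθ, ← ENNReal.mul_rpow_of_nonneg _ _ (by positivity)]
    exact ENNReal.rpow_le_rpow hAE (by positivity)
  have htpos : (0:ℝ) < θ ^ (1/q) := Real.rpow_pos_of_pos hθ _
  have hinv : ENNReal.ofReal ((θ ^ (1/q))⁻¹) * ENNReal.ofReal (θ ^ (1/q)) = 1 := by
    rw [← ENNReal.ofReal_mul (by positivity), inv_mul_cancel₀ htpos.ne', ENNReal.ofReal_one]
  have h4' : ENNReal.ofReal |uA - uE| * (μ E) ^ (1/q) ≤ ENNReal.ofReal ((M + M) * t) := by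
    have hchain : ENNReal.ofReal |uA - uE| * (ENNReal.ofReal (θ ^ (1/q)) * (μ E) ^ (1/q))
        ≤ ENNReal.ofReal (M + M) := by
      refine le_trans ?_ h4
      exact mul_le_mul_right hmge _
    calc ENNReal.ofReal |uA - uE| * (μ E) ^ (1/q)
        = ENNReal.ofReal ((θ ^ (1/q))⁻¹) * ENNReal.ofReal (θ ^ (1/q))
            * (ENNReal.ofReal |uA - uE| * (μ E) ^ (1/q)) := by rw [hinv, one_mul]
      _ = ENNReal.ofReal ((θ ^ (1/q))⁻¹)
            * (ENNReal.ofReal |uA - uE| * (ENNReal.ofReal (θ ^ (1/q)) * (μ E) ^ (1/q))) := by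
          ring
      _ ≤ ENNReal.ofReal ((θ ^ (1/q))⁻¹) * ENNReal.ofReal (M + M) := by gcongr
      _ = ENNReal.ofReal ((M + M) * t) := by
          rw [← ENNReal.ofReal_mul (by positivity), htdef, Real.rpow_neg hθ.le, mul_comm]
  -- Step 3: bound eLpNorm (u - uA) over E, then over A ∪ E
  have hsplitE : eLpNorm (fun x => u x - uA) q' (μ.restrict E)
      ≤ ENNReal.ofReal M + ENNReal.ofReal ((M + M) * t) := by
    have hfun : (fun x => u x - uA) = (fun x => u x - uE) + (fun _ => uE - uA) := by
      funext x; simp only [Pi.add_apply]; ring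
    rw [hfun]
    refine (eLpNorm_add_le (huEi.aestronglyMeasurable.sub aestronglyMeasurable_const)
      aestronglyMeasurable_const hq1').trans ?_
    refine add_le_add hnE ?_
    rw [my_eLpNorm_const μ hq E (uE - uA), abs_sub_comm]
    exact h4'
  set K : ℝ := M + (M + (M + M) * t) with hKdef
  have hUbound : eLpNorm (fun x => u x - uA) q' (μ.restrict (A ∪ E)) ≤ ENNReal.ofReal K := by
    refine (eLpNorm_mono_measure _ (Measure.restrict_union_le A E)).trans ?_
    refine (my_eLpNorm_add_measure_le hq _).trans ?_
    refine (add_le_add hnA hsplitE).trans ?_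
    rw [hKdef, ENNReal.ofReal_add hM (by positivity), ENNReal.ofReal_add hM (by positivity)]
  -- Step 1+2: final triangle inequality
  have havgU : ENNReal.ofReal |uA - uU| * (μ (A ∪ E)) ^ (1/q) ≤ ENNReal.ofReal K := by
    have := my_avg_le μ hq hU0 hUfin hu uA
    rw [abs_sub_comm]
    exact this.trans hUbound
  have hfun2 : (fun x => u x - uU) = (fun x => u x - uA) + (fun _ => uA - uU) := by
    funext x; simp only [Pi.add_apply]; ring
  calc eLpNorm (fun x => u x - uU) q' (μ.restrict (A ∪ E))
      = eLpNorm ((fun x => u x - uA) + (fun _ => uA - uU)) q' (μ.restrict (A ∪ E)) := by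
        rw [hfun2]
    _ ≤ eLpNorm (fun x => u x - uA) q' (μ.restrict (A ∪ E))
          + eLpNorm (fun _ : X => uA - uU) q' (μ.restrict (A ∪ E)) :=
        eLpNorm_add_le (hu.aestronglyMeasurable.sub aestronglyMeasurable_const)
          aestronglyMeasurable_const hq1'
    _ ≤ ENNReal.ofReal K + ENNReal.ofReal |uA - uU| * (μ (A ∪ E)) ^ (1/q) := by
        rw [my_eLpNorm_const μ hq (A ∪ E) (uA - uU)]
        exact add_le_add hUbound le_rfl
    _ ≤ ENNReal.ofReal K + ENNReal.ofReal K := add_le_add le_rfl havgU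
    _ = ENNReal.ofReal (K + K) := (ENNReal.ofReal_add (by positivity) (by positivity)).symm
    _ ≤ ENNReal.ofReal (4 * (1 + t) * M) := ENNReal.ofReal_le_ofReal (le_of_eq (by ring))
end
end

section
/- Let n ≥ 1, 1 ≤ q < ∞, 1 ≤ p < ∞, and let w be a T-invariant weight on ℝⁿ with dμ = w dx satisfying 0 < μ(B) < ∞ for all balls B. If μ supports a (q,p)-Poincaré inequality (Lipschitz formulation) on ℝⁿ with dilation constant λ, then the restriction of μ to the positive hyperquadrant X⁺ supports a (q,p)-Poincaré inequality on X⁺ with the same dilation constant λ. -/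
open MeasureTheory Metric Set Filter ENNReal NNReal

noncomputable section

section LipHelpers

variable {X Y : Type*} [MetricSpace X] [MetricSpace Y]

lemma limsup_nhds_le_of_zero (F : X → ℝ≥0∞) (p : X) (hFp : F p = 0) :
    Filter.limsup F (nhds p) ≤ Filter.limsup F (nhdsWithin p {p}ᶜ) := by
  rw [Filter.limsup_eq (f := nhdsWithin p {p}ᶜ)]
  refine le_sInf fun a ha => ?_
  refine Filter.limsup_le_of_le (by isBoundedDefault) ?_
  simp only [Set.mem_setOf_eq] at ha
  rw [eventually_nhdsWithin_iff] at ha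
  filter_upwards [ha] with z hz
  by_cases hzp : z = p
  · subst hzp; simp [hFp]
  · exact hz hzp

lemma lipConst_comp_le (f : X → Y) (hf : LipschitzWith 1 f) (u : Y → ℝ) (x : X) :
    lipConst (fun z => u (f z)) x ≤ lipConst u (f x) := by
  set F : Y → ℝ≥0∞ := fun v => ENNReal.ofReal (|u v - u (f x)| / dist v (f x)) with hF
  have hFp : F (f x) = 0 := by simp [hF]
  have h1 : lipConst (fun z => u (f z)) x ≤ Filter.limsup (fun z => F (f z)) (nhdsWithin x {x}ᶜ) := by
    refine Filter.limsup_le_limsup (Filter.Eventually.of_forall fun z => ?_)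
    simp only [hF, lipConst]
    apply ENNReal.ofReal_le_ofReal
    rcases eq_or_ne (f z) (f x) with h | h
    · rw [h, sub_self, abs_zero, zero_div, zero_div]
    · have hd : 0 < dist (f z) (f x) := dist_pos.2 h
      have hdle : dist (f z) (f x) ≤ dist z x := by simpa using hf.dist_le_mul z x
      exact div_le_div_of_nonneg_left (abs_nonneg _) hd hdle
  have h2 : Filter.limsup (fun z => F (f z)) (nhdsWithin x {x}ᶜ) ≤ Filter.limsup F (nhds (f x)) := by
    have ht : Filter.Tendsto f (nhdsWithin x {x}ᶜ) (nhds (f x)) :=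
      (hf.continuous.tendsto x).mono_left nhdsWithin_le_nhds
    calc Filter.limsup (fun z => F (f z)) (nhdsWithin x {x}ᶜ)
        = Filter.limsup F (Filter.map f (nhdsWithin x {x}ᶜ)) := by
          rw [Filter.limsup_eq, Filter.limsup_eq]
          simp only [Filter.eventually_map]
      _ ≤ Filter.limsup F (nhds (f x)) := by
          refine Filter.limsup_le_limsup_of_le ht
  exact h1.trans (h2.trans (limsup_nhds_le_of_zero F (f x) hFp))

end LipHelpers

lemma add_rpow_le_two_rpow {q X Y : ℝ} (hq : 1 ≤ q) (hX : 0 ≤ X) (hY : 0 ≤ Y) :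
    (X + Y) ^ q ≤ 2 ^ (q - 1) * (X ^ q + Y ^ q) := by
  have hc := (convexOn_rpow hq).2 (Set.mem_Ici.2 hX) (Set.mem_Ici.2 hY)
      (by norm_num : (0:ℝ) ≤ 1/2) (by norm_num : (0:ℝ) ≤ 1/2) (by norm_num)
  simp only [smul_eq_mul] at hc
  have e1 : X + Y = 2 * (1/2 * X + 1/2 * Y) := by ring
  rw [e1, Real.mul_rpow (by norm_num) (by positivity)]
  calc (2:ℝ) ^ q * (1/2 * X + 1/2 * Y) ^ q
      ≤ 2 ^ q * (1/2 * X ^ q + 1/2 * Y ^ q) := by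
        exact mul_le_mul_of_nonneg_left hc (by positivity)
    _ = 2 ^ (q - 1) * (X ^ q + Y ^ q) := by
        rw [Real.rpow_sub (by norm_num : (0:ℝ) < 2), Real.rpow_one]
        ring

lemma swap_avg {α : Type*} [MeasurableSpace α] (ρ : Measure α) [IsFiniteMeasure ρ]
    (hρ : ρ ≠ 0) {q : ℝ} (hq : 1 ≤ q) (f : α → ℝ) (hf : Integrable f ρ)
    (a K : ℝ) (hK : ∀ᵐ x ∂ρ, |f x - a| ≤ K) :
    ∫⁻ x, ENNReal.ofReal |f x - ⨍ y, f y ∂ρ| ^ q ∂ρ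
      ≤ ENNReal.ofReal (2 ^ q) * ∫⁻ x, ENNReal.ofReal |f x - a| ^ q ∂ρ := by
  have hq0 : (0:ℝ) < q := lt_of_lt_of_le one_pos hq
  haveI : NeZero ρ := ⟨hρ⟩
  set m : ℝ≥0∞ := ρ Set.univ with hm
  have hm0 : m ≠ 0 := by
    simpa [hm, Measure.measure_univ_eq_zero] using hρ
  have hmtop : m ≠ ⊤ := measure_ne_top ρ _
  set g : α → ℝ := fun x => |f x - a| with hg
  have hgi : Integrable g ρ := (hf.sub (integrable_const a)).abs
  have hg0 : ∀ x, 0 ≤ g x := fun x => abs_nonneg _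
  have hrpcont : Continuous (fun t : ℝ => t ^ q) :=
    continuous_iff_continuousAt.2 fun t => Real.continuousAt_rpow_const t q (Or.inr hq0.le)
  have hgm : AEStronglyMeasurable (fun x => g x ^ q) ρ :=
    hrpcont.comp_aestronglyMeasurable hgi.aestronglyMeasurable
  have hKq : ∀ᵐ x ∂ρ, ‖g x ^ q‖ ≤ K ^ q := by
    filter_upwards [hK] with x hx
    rw [Real.norm_eq_abs, abs_of_nonneg (Real.rpow_nonneg (hg0 x) q)]
    exact Real.rpow_le_rpow (hg0 x) hx hq0.le
  have hgqi : Integrable (fun x => g x ^ q) ρ :=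
    Integrable.mono' (integrable_const (K ^ q)) hgm hKq
  set b : ℝ := ⨍ y, f y ∂ρ with hb
  have hmr : (0:ℝ) < m.toReal := ENNReal.toReal_pos hm0 hmtop
  have havg : |b - a| ≤ ⨍ x, g x ∂ρ := by
    have h1 : b - a = (m.toReal)⁻¹ * ∫ x, (f x - a) ∂ρ := by
      rw [integral_sub hf (integrable_const a), integral_const, hb, average_eq]
      simp only [smul_eq_mul]
      have hmr' : ρ.real univ ≠ 0 := hmr.ne'
      rw [show m.toReal = ρ.real univ from rfl]
      field_simp
    rw [h1, average_eq]
    simp only [smul_eq_mul]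
    rw [abs_mul, abs_of_nonneg (inv_nonneg.2 hmr.le)]
    refine mul_le_mul_of_nonneg_left ?_ (inv_nonneg.2 hmr.le)
    calc |∫ x, (f x - a) ∂ρ| ≤ ∫ x, |f x - a| ∂ρ := by
          simpa [Real.norm_eq_abs] using
            norm_integral_le_integral_norm (μ := ρ) (f := fun x => f x - a)
      _ = ∫ x, g x ∂ρ := rfl
  have hjen : (⨍ x, g x ∂ρ) ^ q ≤ ⨍ x, g x ^ q ∂ρ := by
    have hcont : ContinuousOn (fun t : ℝ => t ^ q) (Set.Ici 0) := fun t _ =>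
      (Real.continuousAt_rpow_const t q (Or.inr hq0.le)).continuousWithinAt
    have := (convexOn_rpow hq).map_average_le hcont isClosed_Ici
      (Filter.Eventually.of_forall fun x => Set.mem_Ici.2 (hg0 x)) hgi ?_
    · exact this
    · exact hgqi
  have hba : |b - a| ^ q ≤ ⨍ x, g x ^ q ∂ρ :=
    le_trans (Real.rpow_le_rpow (abs_nonneg _) havg hq0.le) hjen
  have hpt : ∀ x, ENNReal.ofReal |f x - b| ^ q ≤
      ENNReal.ofReal (2 ^ (q - 1)) *
        (ENNReal.ofReal (g x ^ q) + ENNReal.ofReal (|b - a| ^ q)) := by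
    intro x
    rw [ENNReal.ofReal_rpow_of_nonneg (abs_nonneg _) hq0.le,
      ← ENNReal.ofReal_add (by positivity) (by positivity),
      ← ENNReal.ofReal_mul (by positivity)]
    apply ENNReal.ofReal_le_ofReal
    calc |f x - b| ^ q ≤ (g x + |b - a|) ^ q := by
          refine Real.rpow_le_rpow (abs_nonneg _) ?_ hq0.le
          have hfb : f x - b = (f x - a) - (b - a) := by ring
          rw [hfb]
          exact abs_sub (f x - a) (b - a)
      _ ≤ 2 ^ (q - 1) * (g x ^ q + |b - a| ^ q) :=
          add_rpow_le_two_rpow hq (hg0 x) (abs_nonneg _)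
  set A : ℝ≥0∞ := ∫⁻ x, ENNReal.ofReal (g x ^ q) ∂ρ with hA
  have hI : ∫⁻ x, ENNReal.ofReal |f x - b| ^ q ∂ρ ≤
      ENNReal.ofReal (2 ^ (q - 1)) * (A + ENNReal.ofReal (|b - a| ^ q) * m) := by
    calc ∫⁻ x, ENNReal.ofReal |f x - b| ^ q ∂ρ
        ≤ ∫⁻ x, ENNReal.ofReal (2 ^ (q - 1)) *
            (ENNReal.ofReal (g x ^ q) + ENNReal.ofReal (|b - a| ^ q)) ∂ρ :=
          lintegral_mono hpt
      _ = ENNReal.ofReal (2 ^ (q - 1)) *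
          ∫⁻ x, (ENNReal.ofReal (g x ^ q) + ENNReal.ofReal (|b - a| ^ q)) ∂ρ :=
          lintegral_const_mul' _ _ ENNReal.ofReal_ne_top
      _ = _ := by
          rw [lintegral_add_right _ measurable_const, lintegral_const]
  have hAeq : A = ENNReal.ofReal (∫ x, g x ^ q ∂ρ) :=
    (ofReal_integral_eq_lintegral_ofReal hgqi
      (Filter.Eventually.of_forall fun x => Real.rpow_nonneg (hg0 x) q)).symm
  have hconst : ENNReal.ofReal (|b - a| ^ q) * m ≤ A := by
    rw [hAeq]
    have havq : |b - a| ^ q ≤ (m.toReal)⁻¹ * ∫ x, g x ^ q ∂ρ := by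
      simpa [average_eq, smul_eq_mul, measureReal_def, hm] using hba
    calc ENNReal.ofReal (|b - a| ^ q) * m
        ≤ ENNReal.ofReal ((m.toReal)⁻¹ * ∫ x, g x ^ q ∂ρ) * m :=
          mul_le_mul_left (ENNReal.ofReal_le_ofReal havq) m
      _ = ENNReal.ofReal (∫ x, g x ^ q ∂ρ) := by
          rw [ENNReal.ofReal_mul (inv_nonneg.2 hmr.le),
            ENNReal.ofReal_inv_of_pos hmr, ENNReal.ofReal_toReal hmtop,
            mul_comm (m⁻¹) _, mul_assoc, ENNReal.inv_mul_cancel hm0 hmtop, mul_one]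
  have h2q : ENNReal.ofReal (2 ^ (q - 1)) * 2 = ENNReal.ofReal (2 ^ q) := by
    rw [show (2:ℝ≥0∞) = ENNReal.ofReal 2 by simp,
      ← ENNReal.ofReal_mul (by positivity)]
    congr 1
    have h21 : (2:ℝ) ^ q = 2 ^ (q - 1 + 1) := by norm_num
    rw [h21, Real.rpow_add (by norm_num : (0:ℝ) < 2), Real.rpow_one]
  have hfinal : ∫⁻ x, ENNReal.ofReal |f x - b| ^ q ∂ρ ≤ ENNReal.ofReal (2 ^ q) * A := by
    calc ∫⁻ x, ENNReal.ofReal |f x - b| ^ q ∂ρ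
        ≤ ENNReal.ofReal (2 ^ (q - 1)) * (A + ENNReal.ofReal (|b - a| ^ q) * m) := hI
      _ ≤ ENNReal.ofReal (2 ^ (q - 1)) * (A + A) := by
          exact mul_le_mul_right (add_le_add_right hconst A) _
      _ = ENNReal.ofReal (2 ^ (q - 1)) * 2 * A := by ring
      _ = ENNReal.ofReal (2 ^ q) * A := by rw [h2q]
  have hArw : A = ∫⁻ x, ENNReal.ofReal |f x - a| ^ q ∂ρ := by
    rw [hA]
    refine lintegral_congr fun x => ?_
    rw [ENNReal.ofReal_rpow_of_nonneg (abs_nonneg _) hq0.le]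
  rw [← hArw]
  exact hfinal

section Geometry

variable {n : ℕ}

lemma measurable_eval (j : Fin n) : Measurable fun y : En n => y j :=
  (measurable_pi_apply j).comp (MeasurableEquiv.toLp 2 (Fin n → ℝ)).symm.measurable

lemma measurableSet_Xplus : MeasurableSet (Xplus n) := by
  have : Xplus n = ⋂ j : Fin n, {y : En n | 0 ≤ y j} := by
    ext y; simp [Xplus, Set.mem_iInter]
  rw [this]
  exact MeasurableSet.iInter fun j => measurableSet_le measurable_const (measurable_eval j)

lemma lipschitz_Tmap : LipschitzWith 1 (Tmap (n := n)) := by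
  apply LipschitzWith.of_dist_le_mul
  intro x y
  rw [EuclideanSpace.dist_eq, EuclideanSpace.dist_eq, NNReal.coe_one, one_mul]
  apply Real.sqrt_le_sqrt
  apply Finset.sum_le_sum
  intro j _
  have h1 : dist (Tmap x j) (Tmap y j) = |(|x j| - |y j|)| := by
    rw [Real.dist_eq]; simp [Tmap]
  have h2 : dist (x j) (y j) = |x j - y j| := Real.dist_eq _ _
  rw [h1, h2]
  exact pow_le_pow_left₀ (abs_nonneg _) (abs_abs_sub_abs_le_abs_sub _ _) 2

lemma Tmap_mem_Xplus (y : En n) : Tmap y ∈ Xplus n := fun j => abs_nonneg (y j)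

lemma Tmap_fix {x : En n} (hx : x ∈ Xplus n) : Tmap x = x := by
  ext j
  exact abs_of_nonneg (hx j)

/-- sign pattern quadrant -/
def quad (ε : Fin n → Bool) : Set (En n) :=
  {y : En n | ∀ j, if ε j then 0 ≤ y j else y j ≤ 0}

lemma measurableSet_quad (ε : Fin n → Bool) : MeasurableSet (quad ε) := by
  have : quad ε = ⋂ j : Fin n, {y : En n | if ε j then 0 ≤ y j else y j ≤ 0} := by
    ext y; simp [quad, Set.mem_iInter]
  rw [this]
  refine MeasurableSet.iInter fun j => ?_
  cases hj : ε j <;> simp only [hj, if_true, if_false, Bool.false_eq_true]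
  · exact measurableSet_le (measurable_eval j) measurable_const
  · exact measurableSet_le measurable_const (measurable_eval j)

lemma mem_quad_of (y : En n) : y ∈ quad (fun j => decide (0 ≤ y j)) := by
  intro j
  by_cases h : 0 ≤ y j <;> simp [h]
  linarith

lemma union_quad : (⋃ ε : Fin n → Bool, quad ε) = Set.univ := by
  ext y
  simp only [Set.mem_iUnion, Set.mem_univ, iff_true]
  exact ⟨_, mem_quad_of y⟩

def signFlip (ε : Fin n → Bool) : En n → En n := fun y => WithLp.toLp 2 (fun j => if ε j then y j else -(y j))

lemma signFlip_eq_Tmap_on_quad {ε : Fin n → Bool} {y : En n} (hy : y ∈ quad ε) :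
    signFlip ε y = Tmap y := by
  ext j
  have h := hy j
  show (if ε j then y j else -(y j)) = |y j|
  cases hj : ε j
  · simp only [hj, Bool.false_eq_true, if_false] at h ⊢
    exact (abs_of_nonpos h).symm
  · simp only [hj, if_true] at h ⊢
    exact (abs_of_nonneg h).symm

lemma Tmap_signFlip (ε : Fin n → Bool) (y : En n) : Tmap (signFlip ε y) = Tmap y := by
  ext j
  show |signFlip ε y j| = |y j|
  cases hj : ε j <;> simp [signFlip, hj]

/-- the sign flip as measurable equiv -/
def negEquiv : ℝ ≃ᵐ ℝ := (Homeomorph.neg ℝ).toMeasurableEquiv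

def signFlipEquiv (ε : Fin n → Bool) : En n ≃ᵐ En n :=
  (MeasurableEquiv.toLp 2 (Fin n → ℝ)).symm.trans
    ((MeasurableEquiv.piCongrRight
        (fun j => if ε j then MeasurableEquiv.refl ℝ else negEquiv)).trans
      (MeasurableEquiv.toLp 2 (Fin n → ℝ)))

lemma signFlipEquiv_apply (ε : Fin n → Bool) (y : En n) :
    signFlipEquiv ε y = signFlip ε y := by
  ext j
  show (MeasurableEquiv.piCongrRight
      (fun j => if ε j then MeasurableEquiv.refl ℝ else negEquiv))
      ((MeasurableEquiv.toLp 2 (Fin n → ℝ)).symm y) j = _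
  cases hj : ε j <;>
    simp [MeasurableEquiv.piCongrRight, negEquiv, hj, signFlip,
      MeasurableEquiv.coe_toLp]

lemma signFlip_mp (ε : Fin n → Bool) :
    MeasurePreserving (signFlipEquiv ε : En n → En n) volume volume := by
  have h1 := EuclideanSpace.volume_preserving_symm_measurableEquiv_toLp (Fin n)
  have h2 : MeasurePreserving
      (fun (v : Fin n → ℝ) (j : Fin n) =>
        ((if ε j then MeasurableEquiv.refl ℝ else negEquiv) : ℝ ≃ᵐ ℝ) (v j))
      volume volume := by
    rw [volume_pi]
    refine measurePreserving_pi _ _ fun j => ?_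
    cases hj : ε j <;> simp only [hj, if_true, if_false, Bool.false_eq_true]
    · have hneg := Measure.measurePreserving_neg (volume : Measure ℝ)
      have hco : ⇑(negEquiv) = fun x : ℝ => -x := by funext x; rfl
      rw [hco]
      exact hneg
    · exact MeasurePreserving.id (volume : Measure ℝ)
  have h3 : MeasurePreserving
      ((MeasurableEquiv.toLp 2 (Fin n → ℝ))) volume volume := h1.symm _
  exact (h3.comp h2).comp h1

end Geometry

section Fold

variable {n : ℕ}

lemma map_signFlip_wMeasure (w : En n → ℝ) (hT : ∀ x, w (Tmap x) = w x)
    (hw : AEMeasurable (fun x => ENNReal.ofReal (w x)) (volume : Measure (En n)))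
    (ε : Fin n → Bool) :
    Measure.map (signFlipEquiv ε) (wMeasure w) = wMeasure w := by
  set ρ' : En n → ℝ≥0∞ := hw.mk _ with hρ'
  have hρm : Measurable ρ' := hw.measurable_mk
  have hae : (fun x => ENNReal.ofReal (w x)) =ᵐ[(volume : Measure (En n))] ρ' := hw.ae_eq_mk
  have hμ : wMeasure w = volume.withDensity ρ' := withDensity_congr_ae hae
  have hws : ∀ y : En n, w (signFlipEquiv ε y) = w y := by
    intro y
    rw [signFlipEquiv_apply]
    calc w (signFlip ε y) = w (Tmap (signFlip ε y)) := (hT _).symm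
      _ = w (Tmap y) := by rw [Tmap_signFlip]
      _ = w y := hT y
  have haeS : (fun y => ρ' ((signFlipEquiv ε) y)) =ᵐ[(volume : Measure (En n))] ρ' := by
    have hq : Measure.QuasiMeasurePreserving (signFlipEquiv ε : En n → En n)
        (volume : Measure (En n)) (volume : Measure (En n)) :=
      (signFlip_mp ε).quasiMeasurePreserving
    have h1 : (fun y => ρ' ((signFlipEquiv ε) y)) =ᵐ[(volume : Measure (En n))]
        (fun y => ENNReal.ofReal (w ((signFlipEquiv ε) y))) := (hq.ae_eq hae.symm)
    have h2 : (fun y => ENNReal.ofReal (w ((signFlipEquiv ε) y))) =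
        fun y => ENNReal.ofReal (w y) := by
      funext y; rw [hws]
    exact h1.trans (h2 ▸ hae)
  ext A hA
  rw [Measure.map_apply (signFlipEquiv ε).measurable hA, hμ,
    withDensity_apply _ (hA.preimage (signFlipEquiv ε).measurable), withDensity_apply _ hA]
  calc ∫⁻ y in (signFlipEquiv ε) ⁻¹' A, ρ' y ∂volume
      = ∫⁻ y in (signFlipEquiv ε) ⁻¹' A, ρ' ((signFlipEquiv ε) y) ∂volume :=
        (lintegral_congr_ae (ae_restrict_of_ae haeS)).symm
    _ = ∫⁻ y in A, ρ' y ∂(Measure.map (signFlipEquiv ε) volume) :=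
        (setLIntegral_map hA hρm (signFlipEquiv ε).measurable).symm
    _ = ∫⁻ y in A, ρ' y ∂volume := by rw [(signFlip_mp ε).map_eq]

lemma fold_le (w : En n → ℝ) (hT : ∀ x, w (Tmap x) = w x)
    (hw : AEMeasurable (fun x => ENNReal.ofReal (w x)) (volume : Measure (En n)))
    {x : En n} (hx : x ∈ Xplus n) (R : ℝ) (F : En n → ℝ≥0∞) :
    ∫⁻ y in ball x R, F (Tmap y) ∂(wMeasure w)
      ≤ 2 ^ n * ∫⁻ y in ball x R ∩ Xplus n, F y ∂(wMeasure w) := by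
  set μ := wMeasure w with hμ
  have hcover : ball x R = ⋃ ε : Fin n → Bool, (ball x R ∩ quad ε) := by
    rw [← Set.inter_iUnion, union_quad, Set.inter_univ]
  have hstep : ∀ ε : Fin n → Bool,
      ∫⁻ y in ball x R ∩ quad ε, F (Tmap y) ∂μ
        ≤ ∫⁻ y in ball x R ∩ Xplus n, F y ∂μ := by
    intro ε
    set S := (signFlipEquiv ε : En n → En n) with hS
    set A := ball x R ∩ quad ε with hAdef
    have hAm : MeasurableSet A := measurableSet_ball.inter (measurableSet_quad ε)
    have hBm : MeasurableSet (ball x R ∩ Xplus n) :=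
      measurableSet_ball.inter measurableSet_Xplus
    have himg : S '' A ⊆ ball x R ∩ Xplus n := by
      rintro - ⟨y, hy, rfl⟩
      have hTy : S y = Tmap y := by
        rw [hS, signFlipEquiv_apply]
        exact signFlip_eq_Tmap_on_quad hy.2
      rw [hTy]
      constructor
      · have h1 : dist (Tmap y) x < R := by
          have : dist (Tmap y) (Tmap x) ≤ dist y x := by
            simpa using lipschitz_Tmap.dist_le_mul y x
          rw [Tmap_fix hx] at this
          exact lt_of_le_of_lt this (mem_ball.1 hy.1)
        exact mem_ball.2 h1
      · exact Tmap_mem_Xplus y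
    calc ∫⁻ y in A, F (Tmap y) ∂μ
        = ∫⁻ y in A, F (S y) ∂μ := by
          refine setLIntegral_congr_fun hAm (fun y hy => ?_)
          rw [hS, signFlipEquiv_apply, signFlip_eq_Tmap_on_quad hy.2]
      _ = ∫⁻ y, A.indicator (fun z => F (S z)) y ∂μ := (lintegral_indicator hAm _).symm
      _ = ∫⁻ y, (S '' A).indicator F (S y) ∂μ := by
          refine lintegral_congr fun y => ?_
          by_cases hy : y ∈ A
          · rw [Set.indicator_of_mem hy, Set.indicator_of_mem (Set.mem_image_of_mem S hy)]
          · rw [Set.indicator_of_notMem hy, Set.indicator_of_notMem]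
            intro hcon
            obtain ⟨z, hz, hzy⟩ := hcon
            exact hy ((signFlipEquiv ε).injective hzy ▸ hz)
      _ = ∫⁻ y, (S '' A).indicator F y ∂(Measure.map S μ) :=
          ((signFlipEquiv ε).measurableEmbedding.lintegral_map _).symm
      _ = ∫⁻ y, (S '' A).indicator F y ∂μ := by
          rw [hS, hμ, map_signFlip_wMeasure w hT hw ε]
      _ ≤ ∫⁻ y, (ball x R ∩ Xplus n).indicator F y ∂μ := by
          refine lintegral_mono fun y => ?_
          exact Set.indicator_le_indicator_of_subset himg (fun _ => zero_le) y
      _ = ∫⁻ y in ball x R ∩ Xplus n, F y ∂μ := lintegral_indicator hBm _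
  calc ∫⁻ y in ball x R, F (Tmap y) ∂μ
      = ∫⁻ y in ⋃ ε : Fin n → Bool, (ball x R ∩ quad ε), F (Tmap y) ∂μ := by rw [← hcover]
    _ ≤ ∑' ε : Fin n → Bool, ∫⁻ y in ball x R ∩ quad ε, F (Tmap y) ∂μ :=
        lintegral_iUnion_le _ _
    _ ≤ ∑' _ : Fin n → Bool, ∫⁻ y in ball x R ∩ Xplus n, F y ∂μ :=
        ENNReal.tsum_le_tsum hstep
    _ = 2 ^ n * ∫⁻ y in ball x R ∩ Xplus n, F y ∂μ := by
        rw [tsum_fintype]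
        rw [Finset.sum_const, Finset.card_univ]
        rw [nsmul_eq_mul]
        congr 1
        simp [Fintype.card_fun]

end Fold

section SubtypeTransfer

variable {n : ℕ}

lemma lintegral_sub_eq (μ : Measure (En n)) {S : Set (En n)} (hS : MeasurableSet S)
    (F : En n → ℝ≥0∞) {A : Set (En n)} (hA : MeasurableSet A) :
    ∫⁻ z in (Subtype.val ⁻¹' A : Set S), F (z : En n) ∂(subMeasure μ S)
      = ∫⁻ y in A ∩ S, F y ∂μ := by
  have emb : MeasurableEmbedding ((↑) : S → En n) := MeasurableEmbedding.subtype_coe hS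
  have hpre : MeasurableSet (Subtype.val ⁻¹' A : Set S) := measurable_subtype_coe hA
  have hind : ∀ z : S, (Subtype.val ⁻¹' A : Set S).indicator (fun z : S => F (z : En n)) z
      = (A.indicator F) (z : En n) := by
    intro z
    by_cases h : (z : En n) ∈ A
    · rw [Set.indicator_of_mem (Set.mem_preimage.2 h), Set.indicator_of_mem h]
    · rw [Set.indicator_of_notMem (fun hc => h (Set.mem_preimage.1 hc)),
        Set.indicator_of_notMem h]
  calc ∫⁻ z in (Subtype.val ⁻¹' A : Set S), F (z : En n) ∂(subMeasure μ S)
      = ∫⁻ z, (A.indicator F) ((z : S) : En n) ∂(μ.comap Subtype.val) := by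
        rw [← lintegral_indicator hpre]
        exact lintegral_congr hind
    _ = ∫⁻ y, A.indicator F y ∂((μ.comap Subtype.val).map Subtype.val) :=
        (emb.lintegral_map _).symm
    _ = ∫⁻ y, A.indicator F y ∂(μ.restrict S) := by rw [emb.map_comap, Subtype.range_coe]
    _ = ∫⁻ y in A ∩ S, F y ∂μ := by rw [lintegral_indicator hA, Measure.restrict_restrict hA]

lemma ball_subtype {S : Set (En n)} (x : S) (r : ℝ) :
    (ball x r : Set S) = (Subtype.val ⁻¹' ball (x : En n) r : Set S) := by
  ext z
  simp only [mem_ball, Set.mem_preimage, Subtype.dist_eq]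

end SubtypeTransfer

theorem statement5 (n : ℕ) (hn : 1 ≤ n) (q p : ℝ) (hq : 1 ≤ q) (hp : 1 ≤ p)
    (w : En n → ℝ) (hT : ∀ x, w (Tmap x) = w x)
    (hw0 : ∀ x, 0 ≤ w x) (hloc : LocallyIntegrable w volume)
    (hballs : ∀ (x : En n) (r : ℝ), 0 < r →
      0 < wMeasure w (ball x r) ∧ wMeasure w (ball x r) < ⊤)
    (lam : ℝ) (hlam : 1 ≤ lam)
    (hPI : PoincareWith (wMeasure w) q p lam) :
    PoincareWith (subMeasure (wMeasure w) (Xplus n)) q p lam := by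
  classical
  obtain ⟨C, hC, hPI⟩ := hPI
  have hq0 : (0:ℝ) < q := lt_of_lt_of_le one_pos hq
  have hp0 : (0:ℝ) < p := lt_of_lt_of_le one_pos hp
  have hXm : MeasurableSet (Xplus n) := measurableSet_Xplus
  have hwae : AEMeasurable (fun x => ENNReal.ofReal (w x)) (volume : Measure (En n)) :=
    ENNReal.measurable_ofReal.comp_aemeasurable hloc.aestronglyMeasurable.aemeasurable
  have h2n0 : ((2:ℝ≥0∞) ^ n) ≠ 0 := pow_ne_zero n (by norm_num)
  have h2ntop : ((2:ℝ≥0∞) ^ n) ≠ ⊤ := ENNReal.pow_ne_top (by norm_num)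
  refine ⟨(2:ℝ) ^ (q + n + n) * C, by positivity, ?_⟩
  intro x r hr u hu
  obtain ⟨L, hL⟩ := hu
  set ν : Measure (Xplus n) := subMeasure (wMeasure w) (Xplus n) with hνdef
  -- the folding map into the quadrant
  have hTpLip : LipschitzWith 1 (fun y : En n => (⟨Tmap y, Tmap_mem_Xplus y⟩ : Xplus n)) := by
    apply LipschitzWith.of_dist_le_mul
    intro c d
    rw [NNReal.coe_one, one_mul, Subtype.dist_eq]
    simpa using lipschitz_Tmap.dist_le_mul c d
  set Tp : En n → Xplus n := fun y => ⟨Tmap y, Tmap_mem_Xplus y⟩ with hTp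
  set U : En n → ℝ := fun y => u (Tp y) with hU
  have hUlip : LipschitzWith (L * 1) U := hL.comp hTpLip
  have hUz : ∀ z : Xplus n, U (z : En n) = u z := by
    intro z
    have hTpz : Tp (z : En n) = z := Subtype.ext (Tmap_fix z.2)
    show u (Tp (z : En n)) = u z
    rw [hTpz]
  have hmain := hPI (x : En n) r hr U ⟨L * 1, hUlip⟩
  set a : ℝ := ⨍ z in ball (x : En n) r, U z ∂(wMeasure w) with ha
  -- ball measures
  have hrlam : 0 < lam * r := mul_pos (lt_of_lt_of_le one_pos hlam) hr
  obtain ⟨hm0', hmtop'⟩ := hballs (x : En n) r hr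
  obtain ⟨hM0', hMtop'⟩ := hballs (x : En n) (lam * r) hrlam
  set m : ℝ≥0∞ := wMeasure w (ball (x : En n) r) with hm
  set M : ℝ≥0∞ := wMeasure w (ball (x : En n) (lam * r)) with hM
  set mp : ℝ≥0∞ := wMeasure w (ball (x:En n) r ∩ Xplus n) with hmp
  set Mp : ℝ≥0∞ := wMeasure w (ball (x:En n) (lam*r) ∩ Xplus n) with hMp
  have hmple : mp ≤ m := measure_mono Set.inter_subset_left
  have hMple : Mp ≤ M := measure_mono Set.inter_subset_left
  have hνball : ∀ R : ℝ, ν (Subtype.val ⁻¹' ball (x : En n) R)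
      = wMeasure w (ball (x:En n) R ∩ Xplus n) := by
    intro R
    have := lintegral_sub_eq (wMeasure w) hXm (fun _ => (1:ℝ≥0∞))
      (measurableSet_ball (x := (x : En n)) (ε := R))
    simpa [setLIntegral_one] using this
  have hfold1 : m ≤ 2 ^ n * mp := by
    have := fold_le w hT hwae (x.2) r (fun _ => (1:ℝ≥0∞))
    simpa [setLIntegral_one] using this
  have hmp0 : mp ≠ 0 := by
    intro h
    rw [h, mul_zero] at hfold1
    exact absurd (le_antisymm hfold1 zero_le) (ne_of_gt hm0')
  have hmptop : mp ≠ ⊤ := (lt_of_le_of_lt hmple hmtop').ne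
  have hm0 : m ≠ 0 := ne_of_gt hm0'
  have hmtop : m ≠ ⊤ := hmtop'.ne
  -- rewrite subtype balls
  rw [ball_subtype x r, ball_subtype x (lam * r)]
  set s₁ : Set (Xplus n) := Subtype.val ⁻¹' ball (x : En n) r with hs₁
  set s₂ : Set (Xplus n) := Subtype.val ⁻¹' ball (x : En n) (lam * r) with hs₂
  set ρ : Measure (Xplus n) := ν.restrict s₁ with hρdef
  -- finiteness and nontriviality of ρ
  have hρuniv : ρ Set.univ = mp := by
    rw [hρdef, Measure.restrict_apply_univ, hs₁, hνball r, hmp]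
  haveI : IsFiniteMeasure ρ := ⟨by rw [hρuniv]; exact lt_of_le_of_lt hmple hmtop'⟩
  have hρ0 : ρ ≠ 0 := by
    intro h
    rw [h] at hρuniv
    simp at hρuniv
    exact hmp0 hρuniv.symm
  -- integrability of u on ρ
  have hs₁m : MeasurableSet s₁ := measurable_subtype_coe measurableSet_ball
  have hmem : ∀ᵐ z ∂ρ, z ∈ s₁ := ae_restrict_mem hs₁m
  have hub : ∀ᵐ z ∂ρ, ‖u z‖ ≤ |u x| + L * r := by
    filter_upwards [hmem] with z hz
    have hdz : dist z x < r := by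
      have : (z : En n) ∈ ball (x : En n) r := hz
      rw [Subtype.dist_eq]
      exact mem_ball.1 this
    have h1 : |u z - u x| ≤ L * r := by
      have := hL.dist_le_mul z x
      rw [Real.dist_eq] at this
      refine this.trans ?_
      exact mul_le_mul_of_nonneg_left hdz.le L.2
    rw [Real.norm_eq_abs]
    calc |u z| ≤ |u x| + |u z - u x| := by
          have := abs_add_le (u x) (u z - u x)
          simpa [add_sub_cancel] using this
      _ ≤ |u x| + L * r := by linarith
  have hui : Integrable u ρ :=
    Integrable.mono' (integrable_const (|u x| + L * r)) hL.continuous.aestronglyMeasurable hub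
  have hKb : ∀ᵐ z ∂ρ, |u z - a| ≤ (L * r + |u x - a|) := by
    filter_upwards [hmem] with z hz
    have hdz : dist z x < r := by
      have : (z : En n) ∈ ball (x : En n) r := hz
      rw [Subtype.dist_eq]
      exact mem_ball.1 this
    have h1 : |u z - u x| ≤ L * r := by
      have := hL.dist_le_mul z x
      rw [Real.dist_eq] at this
      refine this.trans ?_
      exact mul_le_mul_of_nonneg_left hdz.le L.2
    calc |u z - a| = |(u z - u x) + (u x - a)| := by ring_nf
      _ ≤ |u z - u x| + |u x - a| := abs_add_le _ _
      _ ≤ L * r + |u x - a| := by linarith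
  have hswap := swap_avg ρ hρ0 hq u hui a (L * r + |u x - a|) hKb
  -- transfer the error integral
  have htr1 : ∫⁻ z, ENNReal.ofReal |u z - a| ^ q ∂ρ
      = ∫⁻ y in ball (x:En n) r ∩ Xplus n, ENNReal.ofReal |U y - a| ^ q ∂(wMeasure w) := by
    have h := lintegral_sub_eq (wMeasure w) hXm
      (fun y : En n => ENNReal.ofReal |U y - a| ^ q)
      (measurableSet_ball (x := (x : En n)) (ε := r))
    rw [← h]
    refine lintegral_congr fun z => ?_
    show ENNReal.ofReal |u z - a| ^ q = ENNReal.ofReal |U ((z : Xplus n) : En n) - a| ^ q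
    rw [hUz]
  set I1 : ℝ≥0∞ := ∫⁻ y in ball (x:En n) r, ENNReal.ofReal |U y - a| ^ q ∂(wMeasure w) with hI1
  have hIp : ∫⁻ z, ENNReal.ofReal |u z - ⨍ y, u y ∂ρ| ^ q ∂ρ
      ≤ ENNReal.ofReal (2 ^ q) * I1 := by
    refine hswap.trans ?_
    rw [htr1]
    exact mul_le_mul_right (lintegral_mono_set Set.inter_subset_left) _
  -- lipschitz-constant side
  set F2 : En n → ℝ≥0∞ :=
    fun y => (if h : y ∈ Xplus n then lipConst u ⟨y, h⟩ else 0) ^ p with hF2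
  have hF2T : ∀ y : En n, lipConst U y ^ p ≤ F2 (Tmap y) := by
    intro y
    have h1 : lipConst U y ≤ lipConst u (Tp y) := lipConst_comp_le Tp hTpLip u y
    have h2 : F2 (Tmap y) = lipConst u (Tp y) ^ p := by
      rw [hF2]
      simp only [dif_pos (Tmap_mem_Xplus y)]
      rfl
    rw [h2]
    exact ENNReal.rpow_le_rpow h1 hp0.le
  have hF2z : ∀ z : Xplus n, F2 ((z : Xplus n) : En n) = lipConst u z ^ p := by
    intro z
    rw [hF2]
    simp only [dif_pos z.2]
  set J : ℝ≥0∞ := ∫⁻ y in ball (x:En n) (lam*r), lipConst U y ^ p ∂(wMeasure w) with hJdef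
  set Jp : ℝ≥0∞ := ∫⁻ z in s₂, lipConst u z ^ p ∂ν with hJp
  have hJle : J ≤ 2 ^ n * Jp := by
    calc J ≤ ∫⁻ y in ball (x:En n) (lam*r), F2 (Tmap y) ∂(wMeasure w) :=
          lintegral_mono fun y => hF2T y
      _ ≤ 2 ^ n * ∫⁻ y in ball (x:En n) (lam*r) ∩ Xplus n, F2 y ∂(wMeasure w) :=
          fold_le w hT hwae (x.2) (lam*r) F2
      _ = 2 ^ n * Jp := by
          congr 1
          rw [← lintegral_sub_eq (wMeasure w) hXm F2 measurableSet_ball, hJp, hs₂]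
          exact lintegral_congr fun z => hF2z z
  -- measure inequalities
  have hinv : (mp)⁻¹ ≤ 2 ^ n * m⁻¹ := by
    have h1 : m / 2 ^ n ≤ mp := by
      rw [ENNReal.div_le_iff_le_mul (Or.inl h2n0) (Or.inr hmp0)]
      rw [mul_comm] at hfold1
      exact hfold1
    have h2 : (mp)⁻¹ ≤ (m / 2 ^ n)⁻¹ := ENNReal.inv_le_inv.2 h1
    refine h2.trans ?_
    rw [div_eq_mul_inv, ENNReal.mul_inv (Or.inl hm0) (Or.inl hmtop), inv_inv, mul_comm]
  have hMinv : M⁻¹ ≤ (Mp)⁻¹ := ENNReal.inv_le_inv.2 hMple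
  -- rewrite measures in the goal
  have hg1 : ν s₁ = mp := by rw [hs₁, hνball r]
  have hg2 : ν s₂ = Mp := by rw [hs₂, hνball (lam * r)]
  rw [hg1, hg2]
  -- main chain
  have hone_div_q : 0 ≤ 1 / q := by positivity
  have hone_div_p : 0 ≤ 1 / p := by positivity
  have hdiv1 : (∫⁻ z, ENNReal.ofReal |u z - ⨍ y, u y ∂ρ| ^ q ∂ρ) / mp
      ≤ (ENNReal.ofReal (2 ^ q) * 2 ^ n) * (I1 / m) := by
    rw [div_eq_mul_inv, div_eq_mul_inv]
    calc (∫⁻ z, ENNReal.ofReal |u z - ⨍ y, u y ∂ρ| ^ q ∂ρ) * mp⁻¹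
        ≤ (ENNReal.ofReal (2 ^ q) * I1) * (2 ^ n * m⁻¹) := mul_le_mul' hIp hinv
      _ = (ENNReal.ofReal (2 ^ q) * 2 ^ n) * (I1 * m⁻¹) := by ring
  have hE : (ENNReal.ofReal (2 ^ q) * 2 ^ n) ^ (1/q) ≤ (2:ℝ≥0∞) ^ (q + (n:ℝ)) := by
    have e1 : ENNReal.ofReal (2 ^ q) * (2:ℝ≥0∞) ^ n = (2:ℝ≥0∞) ^ (q + (n:ℝ)) := by
      rw [← ENNReal.ofReal_rpow_of_pos (by norm_num : (0:ℝ) < 2)]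
      rw [show ENNReal.ofReal 2 = (2:ℝ≥0∞) by norm_num]
      rw [ENNReal.rpow_add q (n:ℝ) (by norm_num) (by norm_num), ENNReal.rpow_natCast]
    rw [e1, ← ENNReal.rpow_mul]
    refine ENNReal.rpow_le_rpow_of_exponent_le (by norm_num) ?_
    have : (q + (n:ℝ)) * (1/q) ≤ (q + (n:ℝ)) * 1 := by
      refine mul_le_mul_of_nonneg_left ?_ (by positivity)
      rw [one_div]
      exact inv_le_one_of_one_le₀ hq
    simpa using this
  have hstep1 : ((∫⁻ z, ENNReal.ofReal |u z - ⨍ y, u y ∂ρ| ^ q ∂ρ) / mp) ^ (1/q)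
      ≤ (2:ℝ≥0∞) ^ (q + (n:ℝ)) * (I1 / m) ^ (1/q) := by
    calc ((∫⁻ z, ENNReal.ofReal |u z - ⨍ y, u y ∂ρ| ^ q ∂ρ) / mp) ^ (1/q)
        ≤ ((ENNReal.ofReal (2 ^ q) * 2 ^ n) * (I1 / m)) ^ (1/q) :=
          ENNReal.rpow_le_rpow hdiv1 hone_div_q
      _ = (ENNReal.ofReal (2 ^ q) * 2 ^ n) ^ (1/q) * ((I1 / m) ^ (1/q)) :=
          ENNReal.mul_rpow_of_nonneg _ _ hone_div_q
      _ ≤ (2:ℝ≥0∞) ^ (q + (n:ℝ)) * (I1 / m) ^ (1/q) := mul_le_mul_left hE _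
  have hstep3 : (J / M) ^ (1/p) ≤ (2:ℝ≥0∞) ^ ((n:ℝ)) * (Jp / Mp) ^ (1/p) := by
    have hdiv2 : J / M ≤ (2:ℝ≥0∞) ^ ((n:ℝ)) * (Jp / Mp) := by
      rw [div_eq_mul_inv, div_eq_mul_inv, ENNReal.rpow_natCast]
      calc J * M⁻¹ ≤ (2 ^ n * Jp) * (Mp)⁻¹ := mul_le_mul' hJle hMinv
        _ = 2 ^ n * (Jp * (Mp)⁻¹) := by ring
    calc (J / M) ^ (1/p) ≤ ((2:ℝ≥0∞) ^ ((n:ℝ)) * (Jp / Mp)) ^ (1/p) :=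
          ENNReal.rpow_le_rpow hdiv2 hone_div_p
      _ = ((2:ℝ≥0∞) ^ ((n:ℝ))) ^ (1/p) * (Jp / Mp) ^ (1/p) :=
          ENNReal.mul_rpow_of_nonneg _ _ hone_div_p
      _ ≤ (2:ℝ≥0∞) ^ ((n:ℝ)) * (Jp / Mp) ^ (1/p) := by
          refine mul_le_mul_left ?_ _
          rw [← ENNReal.rpow_mul]
          refine ENNReal.rpow_le_rpow_of_exponent_le (by norm_num) ?_
          have : (n:ℝ) * (1/p) ≤ (n:ℝ) * 1 := by
            refine mul_le_mul_of_nonneg_left ?_ (by positivity)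
            rw [one_div]
            exact inv_le_one_of_one_le₀ hp
          simpa using this
  -- conclude
  have hconst : (2:ℝ≥0∞) ^ (q + (n:ℝ)) * ((2:ℝ≥0∞) ^ ((n:ℝ)) * ENNReal.ofReal (C * r))
      = ENNReal.ofReal ((2:ℝ) ^ (q + (n:ℝ) + (n:ℝ)) * C * r) := by
    rw [← mul_assoc, ← ENNReal.rpow_add (q + (n:ℝ)) ((n:ℝ)) (by norm_num) (by norm_num)]
    rw [show ((2:ℝ≥0∞) : ℝ≥0∞) = ENNReal.ofReal 2 by norm_num]
    rw [ENNReal.ofReal_rpow_of_pos (by norm_num : (0:ℝ) < 2)]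
    rw [← ENNReal.ofReal_mul (by positivity), ← mul_assoc]
  calc ((∫⁻ z, ENNReal.ofReal |u z - ⨍ y, u y ∂ρ| ^ q ∂ρ) / mp) ^ (1/q)
      ≤ (2:ℝ≥0∞) ^ (q + (n:ℝ)) * (I1 / m) ^ (1/q) := hstep1
    _ ≤ (2:ℝ≥0∞) ^ (q + (n:ℝ)) * (ENNReal.ofReal (C * r) * (J / M) ^ (1/p)) :=
        mul_le_mul_right hmain _
    _ ≤ (2:ℝ≥0∞) ^ (q + (n:ℝ)) *
        (ENNReal.ofReal (C * r) * ((2:ℝ≥0∞) ^ ((n:ℝ)) * (Jp / Mp) ^ (1/p))) := by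
        exact mul_le_mul_right (mul_le_mul_right hstep3 _) _
    _ = ((2:ℝ≥0∞) ^ (q + (n:ℝ)) * ((2:ℝ≥0∞) ^ ((n:ℝ)) * ENNReal.ofReal (C * r))) *
        (Jp / Mp) ^ (1/p) := by ring
    _ = ENNReal.ofReal ((2:ℝ) ^ (q + (n:ℝ) + (n:ℝ)) * C * r) * (Jp / Mp) ^ (1/p) := by
        rw [hconst]
end
end

section
/- Let n ≥ 1, α > −n and β ∈ ℝ, and let w(x) = |x|^α φ(|x|)^β be a weight on ℝⁿ, where φ(ρ) = max{1, −log ρ}. Then w is an A₁-weight on ℝⁿ if and only if α < 0, or α = 0 and β ≥ 0. -/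
open MeasureTheory Metric Set Filter ENNReal NNReal

noncomputable section

lemma st14_one_le_phi (ρ : ℝ) : 1 ≤ phi ρ := le_max_left _ _
lemma st14_phi_pos (ρ : ℝ) : 0 < phi ρ := lt_of_lt_of_le one_pos (st14_one_le_phi ρ)

lemma st14_g_pos (α β : ℝ) {s : ℝ} (hs : 0 < s) : 0 < s ^ α * phi s ^ β :=
  mul_pos (Real.rpow_pos_of_pos hs α) (Real.rpow_pos_of_pos (st14_phi_pos s) β)

lemma st14_g_nonneg (α β : ℝ) {s : ℝ} (hs : 0 ≤ s) : 0 ≤ s ^ α * phi s ^ β :=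
  mul_nonneg (Real.rpow_nonneg hs α) (Real.rpow_pos_of_pos (st14_phi_pos s) β).le

lemma st14_phi_anti {s t : ℝ} (hs : 0 < s) (hst : s ≤ t) : phi t ≤ phi s :=
  max_le_max le_rfl (neg_le_neg (Real.log_le_log hs hst))

lemma st14_phi_mul {s t : ℝ} (hs : 0 < s) (hst : s ≤ t) :
    phi s ≤ phi t * (1 + Real.log (t / s)) := by
  have ht : 0 < t := lt_of_lt_of_le hs hst
  have hL : 0 ≤ Real.log (t / s) := Real.log_nonneg ((one_le_div hs).2 hst)
  have h1 : (1 : ℝ) ≤ phi t := st14_one_le_phi t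
  have hlog : -Real.log s = -Real.log t + Real.log (t / s) := by
    rw [Real.log_div ht.ne' hs.ne']; ring
  apply max_le
  · nlinarith
  · rw [hlog]
    have : -Real.log t ≤ phi t := le_max_right _ _
    nlinarith

lemma st14_logpow (b ε : ℝ) (hb : 0 ≤ b) (hε : 0 < ε) :
    ∃ C : ℝ, 1 ≤ C ∧ ∀ u : ℝ, 1 ≤ u → (1 + Real.log u) ^ b ≤ C * u ^ ε := by
  set e : ℝ := ε / (b + 1) with he
  have he0 : 0 < e := div_pos hε (by linarith)
  refine ⟨max 1 ((1 + 1 / e) ^ b), le_max_left _ _, fun u hu => ?_⟩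
  have hu0 : (0 : ℝ) < u := lt_of_lt_of_le one_pos hu
  have hue : (1 : ℝ) ≤ u ^ e := Real.one_le_rpow hu he0.le
  have hlog : Real.log u ≤ u ^ e / e := by
    have h1 : e * Real.log u = Real.log (u ^ e) := (Real.log_rpow hu0 e).symm
    have h2 : Real.log (u ^ e) ≤ u ^ e - 1 :=
      Real.log_le_sub_one_of_pos (Real.rpow_pos_of_pos hu0 e)
    rw [le_div_iff₀ he0, mul_comm]
    nlinarith
  have hstep : 1 + Real.log u ≤ (1 + 1 / e) * u ^ e := by
    have : u ^ e / e = (1 / e) * u ^ e := by ring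
    nlinarith [hlog, hue]
  have h0 : (0 : ℝ) ≤ 1 + Real.log u := by
    have := Real.log_nonneg hu; linarith
  calc (1 + Real.log u) ^ b ≤ ((1 + 1 / e) * u ^ e) ^ b := Real.rpow_le_rpow h0 hstep hb
    _ = (1 + 1 / e) ^ b * (u ^ e) ^ b := by
        rw [Real.mul_rpow (by positivity) (by positivity)]
    _ = (1 + 1 / e) ^ b * u ^ (e * b) := by rw [← Real.rpow_mul hu0.le]
    _ ≤ (1 + 1 / e) ^ b * u ^ ε := by
        have hexp : e * b ≤ ε := by
          rw [he, div_mul_eq_mul_div, div_le_iff₀ (by linarith : (0:ℝ) < b + 1)]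
          nlinarith
        have hmono : u ^ (e * b) ≤ u ^ ε := Real.rpow_le_rpow_of_exponent_le hu hexp
        have hnn : (0:ℝ) ≤ (1 + 1 / e) ^ b := Real.rpow_nonneg (by positivity) b
        nlinarith
    _ ≤ max 1 ((1 + 1 / e) ^ b) * u ^ ε := by
        have h1 : (0:ℝ) ≤ u ^ ε := Real.rpow_nonneg hu0.le ε
        nlinarith [le_max_right (1:ℝ) ((1 + 1 / e) ^ b)]

lemma st14_phipow (β : ℝ) {s t : ℝ} (hs : 0 < s) (hst : s ≤ t) :
    phi t ^ β ≤ phi s ^ β * (1 + Real.log (t / s)) ^ |β| ∧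
    phi s ^ β ≤ phi t ^ β * (1 + Real.log (t / s)) ^ |β| := by
  have ht : 0 < t := lt_of_lt_of_le hs hst
  have hL : 0 ≤ Real.log (t / s) := Real.log_nonneg ((one_le_div hs).2 hst)
  have hL1 : (1 : ℝ) ≤ 1 + Real.log (t / s) := by linarith
  have hanti := st14_phi_anti hs hst
  have hmul := st14_phi_mul hs hst
  rcases le_or_gt 0 β with hβ | hβ
  · have habs : |β| = β := abs_of_nonneg hβ
    constructor
    · rw [habs]
      have h1 : phi t ^ β ≤ phi s ^ β :=
        Real.rpow_le_rpow (st14_phi_pos t).le hanti hβ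
      have h2 : (1 : ℝ) ≤ (1 + Real.log (t / s)) ^ β := Real.one_le_rpow hL1 hβ
      nlinarith [Real.rpow_nonneg (st14_phi_pos s).le β]
    · rw [habs]
      calc phi s ^ β ≤ (phi t * (1 + Real.log (t / s))) ^ β :=
            Real.rpow_le_rpow (st14_phi_pos s).le hmul hβ
        _ = phi t ^ β * (1 + Real.log (t / s)) ^ β :=
            Real.mul_rpow (st14_phi_pos t).le (by linarith)
  · have habs : |β| = -β := abs_of_neg hβ
    have hinv : (1 + Real.log (t / s)) ^ |β| = ((1 + Real.log (t / s)) ^ β)⁻¹ := by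
      rw [habs, Real.rpow_neg (by linarith)]
    have hpow_pos : 0 < (1 + Real.log (t / s)) ^ β :=
      Real.rpow_pos_of_pos (by linarith) β
    constructor
    · -- phi t ^ β ≤ phi s ^ β * (1+L)^{-β}
      have key : phi s / (1 + Real.log (t / s)) ≤ phi t := by
        rw [div_le_iff₀ (by linarith)]; exact hmul
      have h1 : phi t ^ β ≤ (phi s / (1 + Real.log (t / s))) ^ β :=
        Real.rpow_le_rpow_of_nonpos (div_pos (st14_phi_pos s) (by linarith)) key hβ.le
      rw [hinv]
      calc phi t ^ β ≤ (phi s / (1 + Real.log (t / s))) ^ β := h1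
        _ = phi s ^ β / (1 + Real.log (t / s)) ^ β :=
            Real.div_rpow (st14_phi_pos s).le (by linarith) β
        _ = phi s ^ β * ((1 + Real.log (t / s)) ^ β)⁻¹ := by ring
    · have h1 : phi s ^ β ≤ phi t ^ β :=
        Real.rpow_le_rpow_of_nonpos (st14_phi_pos t) hanti hβ.le
      have h2 : (1 : ℝ) ≤ (1 + Real.log (t / s)) ^ |β| := by
        rw [habs]; exact Real.one_le_rpow hL1 (by linarith)
      nlinarith [Real.rpow_pos_of_pos (st14_phi_pos t) β]

/-- K2: controlled growth downward, valid for all α, β with `0 < α + γ`. -/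
lemma st14_K2 (α β γ : ℝ) (hγ : 0 < α + γ) :
    ∃ C : ℝ, 1 ≤ C ∧ ∀ s t : ℝ, 0 < s → s ≤ t →
      s ^ α * phi s ^ β ≤ C * (t / s) ^ γ * (t ^ α * phi t ^ β) := by
  obtain ⟨C, hC1, hC⟩ := st14_logpow |β| (α + γ) (abs_nonneg β) hγ
  refine ⟨C, hC1, fun s t hs hst => ?_⟩
  have ht : 0 < t := lt_of_lt_of_le hs hst
  have hu : (1 : ℝ) ≤ t / s := (one_le_div hs).2 hst
  have hu0 : (0 : ℝ) < t / s := lt_of_lt_of_le one_pos hu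
  have h1 : phi s ^ β ≤ phi t ^ β * (1 + Real.log (t / s)) ^ |β| :=
    (st14_phipow β hs hst).2
  have h2 : (1 + Real.log (t / s)) ^ |β| ≤ C * (t / s) ^ (α + γ) := hC _ hu
  have hsα : 0 < s ^ α := Real.rpow_pos_of_pos hs α
  have hptβ : 0 < phi t ^ β := Real.rpow_pos_of_pos (st14_phi_pos t) β
  have key : s ^ α * (t / s) ^ (α + γ) = (t / s) ^ γ * t ^ α := by
    rw [Real.rpow_add hu0, ← mul_assoc, ← Real.mul_rpow hs.le hu0.le,
      mul_div_cancel₀ _ hs.ne']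
    ring
  have hstep : phi s ^ β ≤ phi t ^ β * (C * (t / s) ^ (α + γ)) :=
    h1.trans (mul_le_mul_of_nonneg_left h2 hptβ.le)
  calc s ^ α * phi s ^ β ≤ s ^ α * (phi t ^ β * (C * (t / s) ^ (α + γ))) :=
        mul_le_mul_of_nonneg_left hstep hsα.le
    _ = C * (s ^ α * (t / s) ^ (α + γ)) * phi t ^ β := by ring
    _ = C * (t / s) ^ γ * (t ^ α * phi t ^ β) := by rw [key]; ring

/-- K1: quasi-decreasing, under the sufficiency hypothesis. -/
lemma st14_K1 (α β : ℝ) (h : α < 0 ∨ (α = 0 ∧ 0 ≤ β)) :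
    ∃ C : ℝ, 1 ≤ C ∧ ∀ s t : ℝ, 0 < s → s ≤ t →
      t ^ α * phi t ^ β ≤ C * (s ^ α * phi s ^ β) := by
  rcases h with hα | ⟨hα, hβ⟩
  · obtain ⟨C, hC1, hC⟩ := st14_logpow |β| (-α) (abs_nonneg β) (by linarith)
    refine ⟨C, hC1, fun s t hs hst => ?_⟩
    have ht : 0 < t := lt_of_lt_of_le hs hst
    have hu : (1 : ℝ) ≤ t / s := (one_le_div hs).2 hst
    have hu0 : (0 : ℝ) < t / s := lt_of_lt_of_le one_pos hu
    have h1 : phi t ^ β ≤ phi s ^ β * (1 + Real.log (t / s)) ^ |β| :=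
      (st14_phipow β hs hst).1
    have h2 : (1 + Real.log (t / s)) ^ |β| ≤ C * (t / s) ^ (-α) := hC _ hu
    have htα : 0 < t ^ α := Real.rpow_pos_of_pos ht α
    have hpsβ : 0 < phi s ^ β := Real.rpow_pos_of_pos (st14_phi_pos s) β
    have key : t ^ α * (t / s) ^ (-α) = s ^ α := by
      rw [Real.rpow_neg hu0.le, ← Real.inv_rpow hu0.le, ← Real.mul_rpow ht.le (by positivity)]
      congr 1
      field_simp
    have hstep : phi t ^ β ≤ phi s ^ β * (C * (t / s) ^ (-α)) :=
      h1.trans (mul_le_mul_of_nonneg_left h2 hpsβ.le)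
    calc t ^ α * phi t ^ β ≤ t ^ α * (phi s ^ β * (C * (t / s) ^ (-α))) :=
          mul_le_mul_of_nonneg_left hstep htα.le
      _ = C * (t ^ α * (t / s) ^ (-α)) * phi s ^ β := by ring
      _ = C * (s ^ α * phi s ^ β) := by rw [key]; ring
  · refine ⟨1, le_rfl, fun s t hs hst => ?_⟩
    subst hα
    rw [Real.rpow_zero, Real.rpow_zero, one_mul, one_mul, one_mul]
    exact Real.rpow_le_rpow (st14_phi_pos t).le (st14_phi_anti hs hst) hβ


lemma st14_nontrivial (n : ℕ) (hn : 1 ≤ n) : Nontrivial (En n) := by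
  refine ⟨EuclideanSpace.single (⟨0, hn⟩ : Fin n) (1:ℝ), 0, fun h => ?_⟩
  have := EuclideanSpace.norm_single (𝕜 := ℝ) (⟨0, hn⟩ : Fin n) (1:ℝ)
  rw [h] at this; simp at this

lemma st14_wmeas (n : ℕ) (α β : ℝ) :
    Measurable (fun x : En n => ‖x‖ ^ α * phi ‖x‖ ^ β) := by
  unfold phi
  have h1 : Measurable (fun t : ℝ => t ^ α) := by fun_prop
  have h3 : Measurable (fun t : ℝ => t ^ β) := by fun_prop
  have h2 : Measurable (fun t : ℝ => max 1 (-Real.log t)) :=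
    measurable_const.max Real.measurable_log.neg
  exact ((h1.comp measurable_norm).mul ((h3.comp h2).comp measurable_norm))

/-- A sub-ball of `ball x₀ r` on which the norm is pinched between `r/4` and `‖x₀‖ + r`. -/
lemma st14_inball (n : ℕ) (hn : 1 ≤ n) (x₀ : En n) (r : ℝ) (hr : 0 < r) :
    ∃ S : Set (En n), S ⊆ ball x₀ r ∧ 0 < volume S ∧
      ∀ x ∈ S, r / 4 ≤ ‖x‖ ∧ ‖x‖ < ‖x₀‖ + r := by
  set e : En n := EuclideanSpace.single (⟨0, hn⟩ : Fin n) (1:ℝ) with he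
  have hne : ‖e‖ = 1 := by rw [he, EuclideanSpace.norm_single]; norm_num
  haveI : Decidable (x₀ = 0) := Classical.dec _
  set u : En n := if x₀ = 0 then e else ‖x₀‖⁻¹ • x₀ with hu
  have hnu : ‖u‖ = 1 := by
    rw [hu]; split_ifs with h
    · exact hne
    · rw [norm_smul, norm_inv, norm_norm, inv_mul_cancel₀ (norm_ne_zero_iff.2 h)]
  set z : En n := x₀ + (r / 2) • u with hz
  have hdz : dist z x₀ = r / 2 := by
    rw [hz, dist_eq_norm, add_sub_cancel_left, norm_smul, hnu, mul_one,
      Real.norm_eq_abs, abs_of_pos (by linarith : (0:ℝ) < r / 2)]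
  have hnz : ‖z‖ = ‖x₀‖ + r / 2 := by
    rw [hz, hu]
    split_ifs with h
    · rw [h, norm_zero, zero_add, norm_smul, hne, mul_one,
        Real.norm_eq_abs, abs_of_pos (by linarith : (0:ℝ) < r / 2)]
      ring
    · have hx0 : (0:ℝ) < ‖x₀‖ := norm_pos_iff.2 h
      have : x₀ + (r / 2) • ‖x₀‖⁻¹ • x₀ = (1 + (r / 2) * ‖x₀‖⁻¹) • x₀ := by
        rw [add_smul, one_smul, smul_smul]
      rw [this, norm_smul, Real.norm_eq_abs,
        abs_of_pos (by positivity : (0:ℝ) < 1 + (r / 2) * ‖x₀‖⁻¹)]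
      field_simp
  refine ⟨ball z (r / 4), ?_, measure_ball_pos _ _ (by linarith), fun x hx => ?_⟩
  · intro x hx
    rw [mem_ball] at hx ⊢
    calc dist x x₀ ≤ dist x z + dist z x₀ := dist_triangle _ _ _
      _ < r / 4 + r / 2 := by linarith [hdz ▸ add_lt_add_right hx (dist z x₀)]
      _ < r := by linarith
  · rw [mem_ball, dist_eq_norm] at hx
    have h1 : ‖z‖ - ‖x - z‖ ≤ ‖x‖ := by
      have := norm_sub_norm_le z x
      have h2 : ‖z - x‖ = ‖x - z‖ := norm_sub_rev z x
      linarith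
    have h2 : ‖x‖ ≤ ‖z‖ + ‖x - z‖ := by
      calc ‖x‖ = ‖z + (x - z)‖ := by rw [add_sub_cancel]
        _ ≤ ‖z‖ + ‖x - z‖ := norm_add_le _ _
    constructor
    · rw [hnz] at h1; linarith [norm_nonneg x₀]
    · rw [hnz] at h2; linarith

lemma st14_cobdd {X : Type*} [MeasurableSpace X] {μ : MeasureTheory.Measure X} {u : X → ℝ}
    {D : ℝ} (h : ∃ᶠ x in MeasureTheory.ae μ, u x ≤ D) :
    IsCoboundedUnder (· ≥ ·) (MeasureTheory.ae μ) u := by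
  refine ⟨D, fun a ha => ?_⟩
  rw [eventually_map] at ha
  obtain ⟨x, h1, h2⟩ := (h.and_eventually ha).exists
  exact le_trans h2 h1

lemma st14_lint (n : ℕ) (hn : 1 ≤ n) (α β γ : ℝ) (hγ0 : 0 ≤ γ) (hγn : γ < n)
    (C₂ : ℝ) (hC₂ : 1 ≤ C₂)
    (hK2 : ∀ s t : ℝ, 0 < s → s ≤ t →
      s ^ α * phi s ^ β ≤ C₂ * (t / s) ^ γ * (t ^ α * phi t ^ β)) :
    ∃ K : ℝ, 0 < K ∧ ∀ R : ℝ, 0 < R →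
      ∫⁻ x in ball (0 : En n) R, ENNReal.ofReal (‖x‖ ^ α * phi ‖x‖ ^ β) ≤
        ENNReal.ofReal (K * (R ^ α * phi R ^ β) * R ^ n) := by
  haveI : Nontrivial (En n) := st14_nontrivial n hn
  have hC₂0 : (0:ℝ) < C₂ := lt_of_lt_of_le one_pos hC₂
  set V : ℝ≥0∞ := volume (ball (0 : En n) 1) with hV
  have hV0 : 0 < V := measure_ball_pos _ _ one_pos
  have hVtop : V ≠ ⊤ := measure_ball_lt_top.ne
  have hVt0 : 0 < V.toReal := ENNReal.toReal_pos hV0.ne' hVtop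
  set ρ : ℝ := 2 ^ γ * (1 / 2 : ℝ) ^ n with hρ
  have h2γ : (0:ℝ) < 2 ^ γ := Real.rpow_pos_of_pos two_pos γ
  have hρ0 : 0 < ρ := by positivity
  have hρ1 : ρ < 1 := by
    have h1 : (2:ℝ) ^ γ < 2 ^ (n:ℝ) := (Real.rpow_lt_rpow_left_iff one_lt_two).2 hγn
    rw [Real.rpow_natCast] at h1
    rw [hρ, one_div, inv_pow, mul_inv_lt_iff₀ (by positivity), one_mul]
    exact h1
  have h1ρ : (0:ℝ) < (1 - ρ)⁻¹ := inv_pos.2 (by linarith)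
  refine ⟨C₂ * 2 ^ γ * V.toReal * (1 - ρ)⁻¹,
    mul_pos (mul_pos (mul_pos hC₂0 h2γ) hVt0) h1ρ, fun R hR => ?_⟩
  have hgR : 0 ≤ R ^ α * phi R ^ β := st14_g_nonneg α β hR.le
  set A : ℕ → Set (En n) :=
    fun k => {x | R * (1/2)^(k+1) ≤ ‖x‖ ∧ ‖x‖ < R * (1/2)^k} with hA
  have hcov : ball (0 : En n) R ⊆ (⋃ k, A k) ∪ {0} := by
    intro x hx
    rcases eq_or_ne x 0 with h0 | h0
    · exact Or.inr (by simp [h0])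
    · left
      rw [mem_ball, dist_zero_right] at hx
      have hx0 : 0 < ‖x‖ := norm_pos_iff.2 h0
      have hex : ∃ k : ℕ, (1/2:ℝ)^(k+1) ≤ ‖x‖ / R := by
        obtain ⟨m, hm⟩ := _root_.exists_pow_lt_of_lt_one (div_pos hx0 hR)
          (by norm_num : (1/2:ℝ) < 1)
        exact ⟨m, le_of_lt (lt_of_le_of_lt
          (pow_le_pow_of_le_one (by norm_num) (by norm_num) (Nat.le_succ m)) hm)⟩
      refine mem_iUnion.2 ⟨Nat.find hex, ?_, ?_⟩
      · have h1 := Nat.find_spec hex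
        rw [le_div_iff₀ hR] at h1
        rw [mul_comm]
        exact h1
      · rcases Nat.eq_zero_or_pos (Nat.find hex) with hk | hk
        · rw [hk]; simpa using hx
        · have hmin := Nat.find_min hex (Nat.sub_lt hk one_pos)
          have hkk : Nat.find hex - 1 + 1 = Nat.find hex := Nat.succ_pred_eq_of_pos hk
          rw [hkk] at hmin
          push_neg at hmin
          rw [div_lt_iff₀ hR] at hmin
          rw [mul_comm]
          exact hmin
  have hnull : volume ({(0:En n)} : Set (En n)) = 0 := measure_singleton 0
  have hterm : ∀ k : ℕ, ∫⁻ x in A k, ENNReal.ofReal (‖x‖ ^ α * phi ‖x‖ ^ β) ≤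
      ENNReal.ofReal (C₂ * 2 ^ γ * (R ^ α * phi R ^ β) * R ^ n) * ENNReal.ofReal ρ ^ k * V := by
    intro k
    have hEk0 : (0:ℝ) ≤ C₂ * (2^γ * (2^γ)^k) * (R ^ α * phi R ^ β) := by
      have : (0:ℝ) ≤ 2^γ * (2^γ)^k := by positivity
      exact mul_nonneg (mul_nonneg hC₂0.le this) hgR
    have hbound : ∀ x ∈ A k, ENNReal.ofReal (‖x‖ ^ α * phi ‖x‖ ^ β) ≤
        ENNReal.ofReal (C₂ * (2^γ * (2^γ)^k) * (R ^ α * phi R ^ β)) := by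
      intro x hx
      obtain ⟨hx1, hx2⟩ := hx
      have hs0 : 0 < ‖x‖ := lt_of_lt_of_le (by positivity) hx1
      have hsR : ‖x‖ ≤ R := by
        have h9 : R * (1/2:ℝ)^k ≤ R * 1 :=
          mul_le_mul_of_nonneg_left (pow_le_one₀ (by norm_num) (by norm_num)) hR.le
        rw [mul_one] at h9; linarith
      have h1 : ‖x‖ ^ α * phi ‖x‖ ^ β ≤
          C₂ * (R / ‖x‖) ^ γ * (R ^ α * phi R ^ β) := hK2 _ _ hs0 hsR
      have h2 : R / ‖x‖ ≤ 2 ^ (k+1 : ℕ) := by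
        rw [div_le_iff₀ hs0]
        have h3 : (2:ℝ)^(k+1) * (R * (1/2)^(k+1)) ≤ 2^(k+1) * ‖x‖ :=
          mul_le_mul_of_nonneg_left hx1 (by positivity)
        have h4 : (2:ℝ)^(k+1) * (1/2:ℝ)^(k+1) = 1 := by
          rw [← mul_pow]; norm_num
        nlinarith [h3]
      have h5 : (R / ‖x‖) ^ γ ≤ ((2:ℝ) ^ (k+1:ℕ)) ^ γ :=
        Real.rpow_le_rpow (by positivity) h2 hγ0
      have h6 : ((2:ℝ) ^ (k+1:ℕ)) ^ γ = 2 ^ γ * (2 ^ γ) ^ k := by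
        rw [← Real.rpow_natCast 2 (k+1), ← Real.rpow_mul (by norm_num : (0:ℝ) ≤ 2)]
        have h7 : ((k+1 : ℕ) : ℝ) * γ = γ + γ * (k:ℕ) := by push_cast; ring
        rw [h7, Real.rpow_add two_pos, Real.rpow_mul (by norm_num : (0:ℝ) ≤ 2),
          Real.rpow_natCast]
      rw [h6] at h5
      have h8 : C₂ * (R / ‖x‖) ^ γ * (R ^ α * phi R ^ β) ≤
          C₂ * (2^γ * (2^γ)^k) * (R ^ α * phi R ^ β) :=
        mul_le_mul_of_nonneg_right (mul_le_mul_of_nonneg_left h5 hC₂0.le) hgR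
      exact ENNReal.ofReal_le_ofReal (h1.trans h8)
    have hrpos : (0:ℝ) < R * (1/2:ℝ)^k := by positivity
    have hreal : C₂ * (2^γ * (2^γ)^k) * (R ^ α * phi R ^ β) * (R*(1/2:ℝ)^k)^n =
        C₂ * 2^γ * (R ^ α * phi R ^ β) * R^n * ρ^k := by
      rw [hρ, mul_pow R, ← pow_mul ((1:ℝ)/2), mul_comm k n, pow_mul ((1:ℝ)/2),
        mul_pow ((2:ℝ)^γ)]
      ring
    calc ∫⁻ x in A k, ENNReal.ofReal (‖x‖ ^ α * phi ‖x‖ ^ β)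
        ≤ ∫⁻ _ in A k, ENNReal.ofReal (C₂ * (2^γ * (2^γ)^k) * (R ^ α * phi R ^ β)) :=
          setLIntegral_mono measurable_const hbound
      _ = ENNReal.ofReal (C₂ * (2^γ * (2^γ)^k) * (R ^ α * phi R ^ β)) * volume (A k) :=
          setLIntegral_const _ _
      _ ≤ ENNReal.ofReal (C₂ * (2^γ * (2^γ)^k) * (R ^ α * phi R ^ β)) *
            volume (ball (0:En n) (R * (1/2)^k)) := by
          gcongr
          intro x hx
          rw [mem_ball, dist_zero_right]
          exact hx.2
      _ = ENNReal.ofReal (C₂ * (2^γ * (2^γ)^k) * (R ^ α * phi R ^ β)) *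
            (ENNReal.ofReal ((R*(1/2:ℝ)^k)^n) * V) := by
          rw [Measure.addHaar_ball volume _ hrpos.le, finrank_euclideanSpace_fin]
      _ = ENNReal.ofReal (C₂ * (2^γ * (2^γ)^k) * (R ^ α * phi R ^ β) * (R*(1/2:ℝ)^k)^n) * V := by
          rw [← mul_assoc, ← ENNReal.ofReal_mul hEk0]
      _ = ENNReal.ofReal (C₂ * 2^γ * (R ^ α * phi R ^ β) * R^n * ρ^k) * V := by
          rw [hreal]
      _ = ENNReal.ofReal (C₂ * 2 ^ γ * (R ^ α * phi R ^ β) * R ^ n) * ENNReal.ofReal ρ ^ k * V := by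
          have hnn' : (0:ℝ) ≤ C₂ * 2^γ * (R ^ α * phi R ^ β) * R^n :=
            mul_nonneg (mul_nonneg (mul_nonneg hC₂0.le h2γ.le) hgR) (by positivity)
          rw [ENNReal.ofReal_mul hnn', ENNReal.ofReal_pow hρ0.le]
  calc ∫⁻ x in ball (0:En n) R, ENNReal.ofReal (‖x‖ ^ α * phi ‖x‖ ^ β)
      ≤ ∫⁻ x in (⋃ k, A k) ∪ {0}, ENNReal.ofReal (‖x‖ ^ α * phi ‖x‖ ^ β) :=
        lintegral_mono_set hcov
    _ ≤ (∫⁻ x in ⋃ k, A k, ENNReal.ofReal (‖x‖ ^ α * phi ‖x‖ ^ β)) +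
        ∫⁻ x in ({0} : Set (En n)), ENNReal.ofReal (‖x‖ ^ α * phi ‖x‖ ^ β) :=
        lintegral_union_le _ _ _
    _ = ∫⁻ x in ⋃ k, A k, ENNReal.ofReal (‖x‖ ^ α * phi ‖x‖ ^ β) := by
        rw [Measure.restrict_eq_zero.2 hnull, lintegral_zero_measure, add_zero]
    _ ≤ ∑' k, ∫⁻ x in A k, ENNReal.ofReal (‖x‖ ^ α * phi ‖x‖ ^ β) := lintegral_iUnion_le _ _
    _ ≤ ∑' k, ENNReal.ofReal (C₂ * 2 ^ γ * (R ^ α * phi R ^ β) * R ^ n) *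
          ENNReal.ofReal ρ ^ k * V := ENNReal.tsum_le_tsum hterm
    _ = ∑' k, (ENNReal.ofReal (C₂ * 2 ^ γ * (R ^ α * phi R ^ β) * R ^ n) * V) *
          ENNReal.ofReal ρ ^ k := tsum_congr (fun k => by ring)
    _ = ENNReal.ofReal (C₂ * 2 ^ γ * (R ^ α * phi R ^ β) * R ^ n) * V *
          (1 - ENNReal.ofReal ρ)⁻¹ := by
        rw [ENNReal.tsum_mul_left, ENNReal.tsum_geometric]
    _ = ENNReal.ofReal (C₂ * 2 ^ γ * V.toReal * (1 - ρ)⁻¹ * (R ^ α * phi R ^ β) * R ^ n) := by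
        have h1 : (1 - ENNReal.ofReal ρ)⁻¹ = ENNReal.ofReal ((1-ρ)⁻¹) := by
          rw [← ENNReal.ofReal_one, ← ENNReal.ofReal_sub 1 hρ0.le,
            ← ENNReal.ofReal_inv_of_pos (by linarith)]
        have hnn : (0:ℝ) ≤ C₂ * 2^γ * (R ^ α * phi R ^ β) * R^n :=
          mul_nonneg (mul_nonneg (mul_nonneg hC₂0.le h2γ.le) hgR) (by positivity)
        rw [h1]
        conv_lhs => rw [← ENNReal.ofReal_toReal hVtop]
        rw [← ENNReal.ofReal_mul hnn,
          ← ENNReal.ofReal_mul (mul_nonneg hnn ENNReal.toReal_nonneg)]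
        congr 1
        ring

lemma st14_avg (n : ℕ) {w : En n → ℝ} (hwm : Measurable w) (hw0 : ∀ x, 0 ≤ w x)
    (x₀ : En n) (r : ℝ) (hr : 0 < r) {D : ℝ} (hD : 0 ≤ D)
    (h : ∫⁻ x in ball x₀ r, ENNReal.ofReal (w x) ≤ ENNReal.ofReal D * volume (ball x₀ r)) :
    (⨍ y in ball x₀ r, w y ∂volume) ≤ D := by
  have hpos : 0 < volume (ball x₀ r) := measure_ball_pos _ _ hr
  have htop : volume (ball x₀ r) ≠ ⊤ := measure_ball_lt_top.ne
  have hvt : 0 < (volume (ball x₀ r)).toReal := ENNReal.toReal_pos hpos.ne' htop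
  have hint : ∫ y in ball x₀ r, w y =
      (∫⁻ x in ball x₀ r, ENNReal.ofReal (w x)).toReal :=
    integral_eq_lintegral_of_nonneg_ae (ae_of_all _ hw0) hwm.aestronglyMeasurable
  have hle : (∫⁻ x in ball x₀ r, ENNReal.ofReal (w x)).toReal ≤
      D * (volume (ball x₀ r)).toReal := by
    have h2 : (ENNReal.ofReal D * volume (ball x₀ r)).toReal =
        D * (volume (ball x₀ r)).toReal := by
      rw [ENNReal.toReal_mul, ENNReal.toReal_ofReal hD]
    rw [← h2]
    exact ENNReal.toReal_mono
      (ENNReal.mul_lt_top ENNReal.ofReal_lt_top measure_ball_lt_top).ne h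
  rw [setAverage_eq, smul_eq_mul, hint, measureReal_def, inv_mul_le_iff₀ hvt]
  calc (∫⁻ x in ball x₀ r, ENNReal.ofReal (w x)).toReal
      ≤ D * (volume (ball x₀ r)).toReal := hle
    _ = (volume (ball x₀ r)).toReal * D := mul_comm _ _

lemma st14_small (α β : ℝ) (hbad : 0 < α ∨ (α = 0 ∧ β < 0)) {ε : ℝ} (hε : 0 < ε) :
    ∃ ρ₀ : ℝ, 0 < ρ₀ ∧ ρ₀ ≤ 1/2 ∧ ∀ s : ℝ, 0 < s → s ≤ ρ₀ → s ^ α * phi s ^ β ≤ ε := by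
  rcases hbad with hα | ⟨hα, hβ⟩
  · obtain ⟨C, hC1, hC⟩ := st14_logpow |β| (α/2) (abs_nonneg β) (by linarith)
    have hC0 : (0:ℝ) < C := lt_of_lt_of_le one_pos hC1
    have hεC : (0:ℝ) < ε / C := div_pos hε hC0
    refine ⟨min (1/2) ((ε/C) ^ (2/α)),
      lt_min (by norm_num) (Real.rpow_pos_of_pos hεC _), min_le_left _ _,
      fun s hs hsρ => ?_⟩
    have hs12 : s ≤ 1/2 := le_trans hsρ (min_le_left _ _)
    have hsinv : (1:ℝ) ≤ s⁻¹ := by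
      rw [le_inv_comm₀ one_pos hs]; linarith
    have h1 : phi s ^ β ≤ phi s ^ |β| :=
      Real.rpow_le_rpow_of_exponent_le (st14_one_le_phi s) (le_abs_self β)
    have h2 : phi s ≤ 1 + Real.log s⁻¹ := by
      have hL : 0 ≤ Real.log s⁻¹ := Real.log_nonneg hsinv
      apply max_le (by linarith)
      rw [Real.log_inv]
      linarith [le_abs_self (-Real.log s)]
    have h3 : phi s ^ |β| ≤ (1 + Real.log s⁻¹) ^ |β| :=
      Real.rpow_le_rpow (st14_phi_pos s).le h2 (abs_nonneg β)
    have h4 : (1 + Real.log s⁻¹) ^ |β| ≤ C * s⁻¹ ^ (α/2) := hC _ hsinv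
    have h5 : s⁻¹ ^ (α/2) = (s ^ (α/2))⁻¹ := Real.inv_rpow hs.le _
    have h6 : s ^ α * (s ^ (α/2))⁻¹ = s ^ (α/2) := by
      rw [← Real.rpow_neg hs.le, ← Real.rpow_add hs]
      congr 1; ring
    have hsα : 0 < s ^ α := Real.rpow_pos_of_pos hs α
    have h7 : s ^ α * phi s ^ β ≤ s ^ α * (C * (s ^ (α/2))⁻¹) := by
      have := (h1.trans h3).trans h4
      rw [h5] at this
      exact mul_le_mul_of_nonneg_left this hsα.le
    have h8 : s ^ α * (C * (s ^ (α/2))⁻¹) = C * s ^ (α/2) := by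
      rw [mul_comm C, ← mul_assoc, h6, mul_comm]
    have h9 : s ^ (α/2) ≤ ε / C := by
      have hs' : s ≤ (ε/C) ^ (2/α) := le_trans hsρ (min_le_right _ _)
      have := Real.rpow_le_rpow hs.le hs' (by linarith : (0:ℝ) ≤ α/2)
      rwa [← Real.rpow_mul hεC.le, (by field_simp : 2/α * (α/2) = 1), Real.rpow_one] at this
    calc s ^ α * phi s ^ β ≤ C * s ^ (α/2) := by rw [← h8]; exact h7
      _ ≤ C * (ε / C) := mul_le_mul_of_nonneg_left h9 hC0.le
      _ = ε := by field_simp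
  · subst hα
    set T : ℝ := max 1 (ε ^ (1/β)) with hT
    have hT1 : (1:ℝ) ≤ T := le_max_left _ _
    have hT0 : (0:ℝ) < T := lt_of_lt_of_le one_pos hT1
    refine ⟨min (1/2) (Real.exp (-T)), lt_min (by norm_num) (Real.exp_pos _),
      min_le_left _ _, fun s hs hsρ => ?_⟩
    have hse : s ≤ Real.exp (-T) := le_trans hsρ (min_le_right _ _)
    have hlog : Real.log s ≤ -T := by
      calc Real.log s ≤ Real.log (Real.exp (-T)) := Real.log_le_log hs hse
        _ = -T := Real.log_exp _
    have hphi : T ≤ phi s := by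
      rw [phi]; exact le_max_of_le_right (by linarith)
    have h1 : phi s ^ β ≤ T ^ β := Real.rpow_le_rpow_of_nonpos hT0 hphi hβ.le
    have h2 : T ^ β ≤ (ε ^ (1/β)) ^ β :=
      Real.rpow_le_rpow_of_nonpos (Real.rpow_pos_of_pos hε _) (le_max_right _ _) hβ.le
    have h3 : (ε ^ (1/β)) ^ β = ε := by
      rw [← Real.rpow_mul hε.le, (by rw [one_div, inv_mul_cancel₀ hβ.ne] : 1/β * β = 1), Real.rpow_one]
    rw [Real.rpow_zero, one_mul]
    calc phi s ^ β ≤ T ^ β := h1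
      _ ≤ ε := h3 ▸ h2

theorem statement14' (n : ℕ) (hn : 1 ≤ n) (α β : ℝ) (hα : -(n : ℝ) < α)
    (w : En n → ℝ) (hw : ∀ x, w x = ‖x‖ ^ α * phi ‖x‖ ^ β) :
    ((∃ C : ℝ, 0 < C ∧ ∀ (x : En n) (r : ℝ), 0 < r →
      (⨍ y in ball x r, w y ∂volume) ≤ C * essInf w (volume.restrict (ball x r))))
      ↔ (α < 0 ∨ (α = 0 ∧ 0 ≤ β)) := by
  haveI : Nontrivial (En n) := st14_nontrivial n hn
  have hwm : Measurable w := by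
    have h := st14_wmeas n α β
    rwa [← funext hw] at h
  have hw0 : ∀ x, 0 ≤ w x := fun x => (hw x) ▸ st14_g_nonneg α β (norm_nonneg x)
  have hn0 : (0:ℝ) < n := by exact_mod_cast Nat.pos_of_ne_zero (by omega)
  set γ : ℝ := max (((n:ℝ) - α)/2) 0 with hγ
  have hγ0 : 0 ≤ γ := le_max_right _ _
  have hγn : γ < n := max_lt (by linarith) hn0
  have hαγ : 0 < α + γ := by
    have := le_max_left (((n:ℝ) - α)/2) 0
    linarith
  obtain ⟨C₂, hC₂1, hK2⟩ := st14_K2 α β γ hαγ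
  have hC₂0 : (0:ℝ) < C₂ := lt_of_lt_of_le one_pos hC₂1
  obtain ⟨K, hK0, hlint⟩ := st14_lint n hn α β γ hγ0 hγn C₂ hC₂1 hK2
  have hVpos : (0:ℝ≥0∞) < volume (ball (0 : En n) 1) := measure_ball_pos _ _ one_pos
  have hVtop : volume (ball (0 : En n) 1) ≠ ⊤ := measure_ball_lt_top.ne
  have hVt0 : 0 < (volume (ball (0 : En n) 1)).toReal := ENNReal.toReal_pos hVpos.ne' hVtop
  constructor
  · -- necessity
    rintro ⟨C, hC0, hball⟩
    by_contra hcon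
    push_neg at hcon
    obtain ⟨h1, h2⟩ := hcon
    have hbad : 0 < α ∨ (α = 0 ∧ β < 0) := by
      rcases lt_or_eq_of_le h1 with h3 | h3
      · exact Or.inl h3
      · exact Or.inr ⟨h3.symm, h2 h3.symm⟩
    have hball1 := hball 0 1 one_pos
    have hEle : essInf w (volume.restrict (ball (0:En n) 1)) ≤ 0 := by
      apply _root_.le_of_forall_pos_le_add
      intro ε hε
      rw [zero_add]
      obtain ⟨ρ₀, hρ₀0, hρ₀12, hρ₀⟩ := st14_small α β hbad hε
      obtain ⟨S, hS1, hS2, hS3⟩ := st14_inball n hn 0 ρ₀ hρ₀0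
      have hfreq : ∃ᶠ x in MeasureTheory.ae (volume.restrict (ball (0:En n) 1)), w x ≤ ε := by
        rw [frequently_ae_iff, Measure.restrict_apply (measurableSet_le hwm measurable_const)]
        have hsub : S ⊆ {x : En n | w x ≤ ε} ∩ ball (0:En n) 1 := by
          intro x hx
          obtain ⟨ha, hb⟩ := hS3 x hx
          rw [norm_zero, zero_add] at hb
          have hx0 : 0 < ‖x‖ := lt_of_lt_of_le (by linarith) ha
          refine ⟨?_, ?_⟩
          · show w x ≤ ε
            rw [hw x]
            exact hρ₀ _ hx0 hb.le
          · rw [mem_ball, dist_zero_right]; linarith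
        intro h0
        exact absurd (le_antisymm (h0 ▸ measure_mono hsub) zero_le) hS2.ne'
      have hbdd : IsBoundedUnder (· ≥ ·)
          (MeasureTheory.ae (volume.restrict (ball (0:En n) 1))) w :=
        ⟨0, eventually_map.2 (ae_of_all _ hw0)⟩
      exact liminf_le_of_frequently_le hfreq hbdd
    obtain ⟨S₀, hT1, hT2, hT3⟩ := st14_inball n hn 0 (1/2) (by norm_num)
    have h4γ : (0:ℝ) < 4 ^ γ := Real.rpow_pos_of_pos (by norm_num) γ
    set c : ℝ := ((1/8:ℝ) ^ α * phi (1/8) ^ β) / (C₂ * 4 ^ γ) with hc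
    have hc0 : 0 < c := div_pos (st14_g_pos α β (by norm_num)) (mul_pos hC₂0 h4γ)
    have hlow : ∀ x ∈ S₀, c ≤ w x := by
      intro x hx
      obtain ⟨ha, hb⟩ := hT3 x hx
      rw [norm_zero, zero_add] at hb
      have ha' : (1/8:ℝ) ≤ ‖x‖ := by linarith
      have h1 := hK2 (1/8) ‖x‖ (by norm_num) ha'
      have h2 : (‖x‖/(1/8:ℝ)) ^ γ ≤ 4 ^ γ := by
        apply Real.rpow_le_rpow (by positivity) _ hγ0
        rw [div_le_iff₀ (by norm_num : (0:ℝ) < 1/8)]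
        linarith
      have h3 : C₂ * (‖x‖/(1/8:ℝ)) ^ γ * (‖x‖ ^ α * phi ‖x‖ ^ β) ≤
          C₂ * 4 ^ γ * (‖x‖ ^ α * phi ‖x‖ ^ β) :=
        mul_le_mul_of_nonneg_right (mul_le_mul_of_nonneg_left h2 hC₂0.le)
          (st14_g_nonneg α β (norm_nonneg x))
      rw [hw x, hc, div_le_iff₀ (mul_pos hC₂0 h4γ)]
      calc (1/8:ℝ) ^ α * phi (1/8) ^ β
          ≤ C₂ * 4 ^ γ * (‖x‖ ^ α * phi ‖x‖ ^ β) := h1.trans h3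
        _ = ‖x‖ ^ α * phi ‖x‖ ^ β * (C₂ * 4 ^ γ) := by ring
    have hS₀sub : S₀ ⊆ ball (0:En n) 1 := hT1.trans (ball_subset_ball (by norm_num))
    have hlintlow : ENNReal.ofReal c * volume S₀ ≤
        ∫⁻ x in ball (0:En n) 1, ENNReal.ofReal (w x) := by
      calc ENNReal.ofReal c * volume S₀ = ∫⁻ _ in S₀, ENNReal.ofReal c :=
            (setLIntegral_const _ _).symm
        _ ≤ ∫⁻ x in S₀, ENNReal.ofReal (w x) :=
            setLIntegral_mono hwm.ennreal_ofReal
              (fun x hx => ENNReal.ofReal_le_ofReal (hlow x hx))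
        _ ≤ ∫⁻ x in ball (0:En n) 1, ENNReal.ofReal (w x) := lintegral_mono_set hS₀sub
    have hfin : ∫⁻ x in ball (0:En n) 1, ENNReal.ofReal (w x) ≠ ⊤ := by
      have h1' : ∫⁻ x in ball (0:En n) 1, ENNReal.ofReal (w x) =
          ∫⁻ x in ball (0:En n) 1, ENNReal.ofReal (‖x‖ ^ α * phi ‖x‖ ^ β) := by
        congr 1; funext x; rw [hw x]
      rw [h1']
      exact (lt_of_le_of_lt (hlint 1 one_pos) ENNReal.ofReal_lt_top).ne
    have hposlint : 0 < ∫⁻ x in ball (0:En n) 1, ENNReal.ofReal (w x) := by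
      refine lt_of_lt_of_le ?_ hlintlow
      exact ENNReal.mul_pos (ENNReal.ofReal_pos.2 hc0).ne' hT2.ne'
    have havg : 0 < ⨍ y in ball (0:En n) 1, w y ∂volume := by
      rw [setAverage_eq, smul_eq_mul,
        integral_eq_lintegral_of_nonneg_ae (ae_of_all _ hw0) hwm.aestronglyMeasurable]
      exact mul_pos (inv_pos.2 (ENNReal.toReal_pos (measure_ball_pos _ _ one_pos).ne'
        measure_ball_lt_top.ne)) (ENNReal.toReal_pos hposlint.ne' hfin)
    nlinarith [mul_nonneg hC0.le (neg_nonneg.2 hEle)]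
  · -- sufficiency
    intro hsuff
    obtain ⟨C₁, hC₁1, hK1⟩ := st14_K1 α β hsuff
    have hC₁0 : (0:ℝ) < C₁ := lt_of_lt_of_le one_pos hC₁1
    set Vt : ℝ := (volume (ball (0 : En n) 1)).toReal with hVt
    have h3γ : (0:ℝ) < 3 ^ γ := Real.rpow_pos_of_pos (by norm_num) γ
    set m1 : ℝ := max (K * 3^n * C₁ / Vt) (C₂ * 3 ^ γ) with hm1
    have hm10 : 0 < m1 := lt_of_lt_of_le (mul_pos hC₂0 h3γ) (le_max_right _ _)
    refine ⟨C₁ * m1, mul_pos hC₁0 hm10, fun x₀ r hr => ?_⟩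
    set M : ℝ := ‖x₀‖ + r with hM
    have hM0 : 0 < M := by
      have := norm_nonneg x₀
      rw [hM]; linarith
    set gM : ℝ := M ^ α * phi M ^ β with hgM
    have hgM0 : 0 < gM := st14_g_pos α β hM0
    set E : ℝ := essInf w (volume.restrict (ball x₀ r)) with hE
    obtain ⟨S, hS1, hS2, hS3⟩ := st14_inball n hn x₀ r hr
    have hr4 : (0:ℝ) < r/4 := by linarith
    set D₀ : ℝ := C₂ * (M/(r/4)) ^ γ * gM with hD₀
    have hSD : ∀ x ∈ S, w x ≤ D₀ := by
      intro x hx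
      obtain ⟨ha, hb⟩ := hS3 x hx
      have hx0 : 0 < ‖x‖ := lt_of_lt_of_le hr4 ha
      have h1 := hK2 ‖x‖ M hx0 hb.le
      have h2 : (M/‖x‖) ^ γ ≤ (M/(r/4)) ^ γ := by
        apply Real.rpow_le_rpow (by positivity) _ hγ0
        exact div_le_div_of_nonneg_left hM0.le hr4 ha
      have h3 : C₂ * (M/‖x‖) ^ γ * gM ≤ C₂ * (M/(r/4)) ^ γ * gM :=
        mul_le_mul_of_nonneg_right (mul_le_mul_of_nonneg_left h2 hC₂0.le) hgM0.le
      rw [hw x]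
      exact h1.trans h3
    have hfreq : ∃ᶠ x in MeasureTheory.ae (volume.restrict (ball x₀ r)), w x ≤ D₀ := by
      rw [frequently_ae_iff, Measure.restrict_apply (measurableSet_le hwm measurable_const)]
      have hsub : S ⊆ {x : En n | w x ≤ D₀} ∩ ball x₀ r :=
        fun x hx => ⟨hSD x hx, hS1 hx⟩
      intro h0
      exact absurd (le_antisymm (h0 ▸ measure_mono hsub) zero_le) hS2.ne'
    have hae : ∀ᵐ x ∂(volume.restrict (ball x₀ r)), gM / C₁ ≤ w x := by
      have hz : ∀ᵐ x ∂(volume : Measure (En n)), x ≠ (0 : En n) := by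
        rw [ae_iff]
        have hset : {x : En n | ¬ x ≠ 0} = {0} := by ext y; simp
        rw [hset]
        exact measure_singleton 0
      filter_upwards [ae_restrict_of_ae hz, ae_restrict_mem measurableSet_ball] with x hx0 hxb
      have hnx : 0 < ‖x‖ := norm_pos_iff.2 hx0
      have hxM : ‖x‖ ≤ M := (norm_lt_of_mem_ball hxb).le
      have h1 := hK1 ‖x‖ M hnx hxM
      rw [hw x, div_le_iff₀ hC₁0]
      calc gM ≤ C₁ * (‖x‖ ^ α * phi ‖x‖ ^ β) := h1
        _ = (‖x‖ ^ α * phi ‖x‖ ^ β) * C₁ := mul_comm _ _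
    have hEI : gM / C₁ ≤ E := le_liminf_of_le (st14_cobdd hfreq) hae
    have hE0 : 0 < E := lt_of_lt_of_le (div_pos hgM0 hC₁0) hEI
    have hEI' : gM ≤ C₁ * E := by
      rw [div_le_iff₀ hC₁0] at hEI
      linarith [hEI]
    rcases le_or_gt ‖x₀‖ (2*r) with hcase | hcase
    · have hM3r : M ≤ 3 * r := by rw [hM]; linarith
      have h3r : (0:ℝ) < 3 * r := by linarith
      set g3 : ℝ := (3*r) ^ α * phi (3*r) ^ β with hg3
      have hg30 : 0 < g3 := st14_g_pos α β h3r
      set D₁ : ℝ := K * g3 * 3^n / Vt with hD₁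
      have hD₁0 : 0 ≤ D₁ :=
        div_nonneg (mul_nonneg (mul_nonneg hK0.le hg30.le) (by positivity)) hVt0.le
      have havg1 : (⨍ y in ball x₀ r, w y ∂volume) ≤ D₁ := by
        apply st14_avg n hwm hw0 x₀ r hr hD₁0
        have hsub : ball x₀ r ⊆ ball (0 : En n) (3*r) := by
          intro x hx
          rw [mem_ball, dist_zero_right]
          have := norm_lt_of_mem_ball hx
          linarith
        have hwlam : ∫⁻ x in ball x₀ r, ENNReal.ofReal (w x) =
            ∫⁻ x in ball x₀ r, ENNReal.ofReal (‖x‖ ^ α * phi ‖x‖ ^ β) := by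
          congr 1; funext x; rw [hw x]
        rw [hwlam]
        calc ∫⁻ x in ball x₀ r, ENNReal.ofReal (‖x‖ ^ α * phi ‖x‖ ^ β)
            ≤ ∫⁻ x in ball (0:En n) (3*r), ENNReal.ofReal (‖x‖ ^ α * phi ‖x‖ ^ β) :=
              lintegral_mono_set hsub
          _ ≤ ENNReal.ofReal (K * g3 * (3*r)^n) := hlint (3*r) h3r
          _ = ENNReal.ofReal D₁ * volume (ball x₀ r) := by
              rw [Measure.addHaar_ball volume x₀ hr.le, finrank_euclideanSpace_fin]
              conv_rhs => rw [← ENNReal.ofReal_toReal hVtop]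
              rw [← ENNReal.ofReal_mul (by positivity : (0:ℝ) ≤ r^n),
                ← ENNReal.ofReal_mul hD₁0]
              congr 1
              rw [hD₁, mul_pow]
              field_simp
              ring
      have hg3E : g3 ≤ C₁ * (C₁ * E) :=
        (hK1 M (3*r) hM0 hM3r).trans (mul_le_mul_of_nonneg_left hEI' hC₁0.le)
      have hfac : (0:ℝ) ≤ K * 3^n / Vt := by positivity
      have hle1 : D₁ ≤ C₁ * m1 * E := by
        have h5 : D₁ = (K * 3^n / Vt) * g3 := by rw [hD₁]; ring
        have h6 := mul_le_mul_of_nonneg_left hg3E hfac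
        rw [← h5] at h6
        have h7 : (K * 3^n / Vt) * (C₁ * (C₁ * E)) = C₁ * (K * 3^n * C₁ / Vt) * E := by
          ring
        rw [h7] at h6
        have h8 : C₁ * (K * 3^n * C₁ / Vt) * E ≤ C₁ * m1 * E := by
          apply mul_le_mul_of_nonneg_right _ hE0.le
          exact mul_le_mul_of_nonneg_left (le_max_left _ _) hC₁0.le
        exact h6.trans h8
      exact havg1.trans hle1
    · set D₂ : ℝ := C₂ * 3 ^ γ * gM with hD₂
      have hD₂0 : 0 ≤ D₂ := (mul_nonneg (mul_nonneg hC₂0.le h3γ.le) hgM0.le)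
      have havg2 : (⨍ y in ball x₀ r, w y ∂volume) ≤ D₂ := by
        apply st14_avg n hwm hw0 x₀ r hr hD₂0
        have hbound : ∀ x ∈ ball x₀ r, ENNReal.ofReal (w x) ≤ ENNReal.ofReal D₂ := by
          intro x hx
          apply ENNReal.ofReal_le_ofReal
          have hd1 : dist x x₀ < r := mem_ball.1 hx
          have hlow2 : ‖x₀‖ - r < ‖x‖ := by
            have h2' : ‖x₀‖ ≤ ‖x‖ + dist x x₀ := by
              calc ‖x₀‖ = ‖x + (x₀ - x)‖ := by rw [add_sub_cancel]
                _ ≤ ‖x‖ + ‖x₀ - x‖ := norm_add_le _ _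
                _ = ‖x‖ + dist x x₀ := by rw [← dist_eq_norm, dist_comm]
            linarith
          have hx0 : 0 < ‖x‖ := by linarith
          have h1 := hK2 ‖x‖ M hx0 (norm_lt_of_mem_ball hx).le
          have h2 : (M/‖x‖) ^ γ ≤ 3 ^ γ := by
            apply Real.rpow_le_rpow (by positivity) _ hγ0
            rw [div_le_iff₀ hx0]
            rw [hM]
            linarith
          have h3 : C₂ * (M/‖x‖) ^ γ * gM ≤ C₂ * 3 ^ γ * gM :=
            mul_le_mul_of_nonneg_right (mul_le_mul_of_nonneg_left h2 hC₂0.le) hgM0.le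
          rw [hw x]
          exact h1.trans h3
        calc ∫⁻ x in ball x₀ r, ENNReal.ofReal (w x)
            ≤ ∫⁻ _ in ball x₀ r, ENNReal.ofReal D₂ :=
              setLIntegral_mono measurable_const hbound
          _ = ENNReal.ofReal D₂ * volume (ball x₀ r) := setLIntegral_const _ _
      have hle2 : D₂ ≤ C₁ * m1 * E := by
        have h6 : D₂ ≤ C₂ * 3^γ * (C₁ * E) := by
          rw [hD₂]
          exact mul_le_mul_of_nonneg_left hEI' (mul_pos hC₂0 h3γ).le
        have h7 : C₂ * 3^γ * (C₁ * E) ≤ m1 * (C₁ * E) :=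
          mul_le_mul_of_nonneg_right (le_max_right _ _) (mul_pos hC₁0 hE0).le
        calc D₂ ≤ m1 * (C₁ * E) := h6.trans h7
          _ = C₁ * m1 * E := by ring
      exact havg2.trans hle2

theorem statement14 (n : ℕ) (hn : 1 ≤ n) (α β : ℝ) (hα : -(n : ℝ) < α)
    (w : En n → ℝ) (hw : ∀ x, w x = ‖x‖ ^ α * phi ‖x‖ ^ β) :
    IsApWeight 1 w ↔ (α < 0 ∨ (α = 0 ∧ 0 ≤ β)) := by
  have h := statement14' n hn α β hα w hw
  unfold IsApWeight
  rw [← h]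
  constructor
  · rintro (⟨-, h'⟩ | ⟨h11, -⟩)
    · exact h'
    · exact absurd h11 (by norm_num)
  · exact fun h' => Or.inl ⟨rfl, h'⟩
end
end
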